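/- arXiv:0811.1809 — 3 statements merged into one kernel-verified Lean document; each statement's English description precedes it below -/
import Mathlib

section
/- Let T be a Marco–Martens map on the probability space (X, ℬ, m) with Marco–Martens cover {X_j}_{j≥0}, let l_B be a Banach limit, and let μ be the set function defined by μ(A) := Σ_{j=0}^∞ l_B((m_n(A ∩ Y_j))_{n≥1}) for measurable A ⊆ X. Then μ is T-invariant: μ(T⁻¹(A)) = μ(A) for every measurable set A ⊆ X. -/
open MeasureTheory Set Filter

/-- `MMY Xs j = Y_j := X_j \ ⋃_{i < j} X_i`. -/
def MMY {X : Type*} (Xs : ℕ → Set X) (j : ℕ) : Set X := Xs j \ ⋃ i ∈ Set.Iio j, Xs i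

/-- `T` is a Marco–Martens map on the probability space `(X, ℬ, m)` with Marco–Martens cover
`(X_j)_{j ≥ 0}` and constants `(K_j)_{j ≥ 0}` (condition (4)): `T` is measurable, maps
measurable sets to measurable sets, `m` is quasi-invariant under `T`, and conditions
(2)–(6) of the definition hold. -/
structure MarcoMartens {X : Type*} [MeasurableSpace X] (m : Measure X) (T : X → X)
    (Xs : ℕ → Set X) (K : ℕ → ℝ) : Prop where
  measurable_T : Measurable T
  image_meas : ∀ A : Set X, MeasurableSet A → MeasurableSet (T '' A)
  quasi_invariant : m.map T ≪ m
  meas_Xs : ∀ j, MeasurableSet (Xs j)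
  cover : m (univ \ ⋃ n, Xs n) = 0
  cond3 : ∀ i j : ℕ, ∃ k : ℕ, 0 < m (Xs i ∩ T^[k] ⁻¹' Xs j)
  one_le_K : ∀ j, 1 ≤ K j
  cond4 : ∀ j : ℕ, ∀ A B : Set X, MeasurableSet A → MeasurableSet B →
    A ⊆ Xs j → B ⊆ Xs j → ∀ n : ℕ,
    m (T^[n] ⁻¹' A) * m B ≤ ENNReal.ofReal (K j) * (m A * m (T^[n] ⁻¹' B))
  cond5 : ∑' n : ℕ, m (T^[n] ⁻¹' Xs 0) = ⊤
  cond6 : Tendsto (fun l : ℕ => m (T '' ⋃ j ∈ Set.Ici l, MMY Xs j)) atTop (nhds 0)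

/-- `mseq m T Xs A n = m_n(A) := (Σ_{k=0}^n m(T^{-k}A)) / (Σ_{k=0}^n m(T^{-k}X_0))`. -/
noncomputable def mseq {X : Type*} [MeasurableSpace X] (m : Measure X) (T : X → X)
    (Xs : ℕ → Set X) (A : Set X) (n : ℕ) : ℝ :=
  (∑ k ∈ Finset.range (n + 1), (m (T^[k] ⁻¹' A)).toReal) /
    (∑ k ∈ Finset.range (n + 1), (m (T^[k] ⁻¹' Xs 0)).toReal)

/-- `lB` is a Banach limit: a positive, normalized, shift-invariant linear functional on the
space of bounded real sequences. -/
structure IsBanachLimit (lB : (ℕ → ℝ) → ℝ) : Prop where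
  map_add : ∀ x y : ℕ → ℝ, (∃ C, ∀ n, |x n| ≤ C) → (∃ C, ∀ n, |y n| ≤ C) →
    lB (x + y) = lB x + lB y
  map_smul : ∀ (c : ℝ) (x : ℕ → ℝ), (∃ C, ∀ n, |x n| ≤ C) → lB (c • x) = c * lB x
  nonneg : ∀ x : ℕ → ℝ, (∃ C, ∀ n, |x n| ≤ C) → (∀ n, 0 ≤ x n) → 0 ≤ lB x
  map_one : lB (fun _ => 1) = 1
  shift_invariant : ∀ x : ℕ → ℝ, (∃ C, ∀ n, |x n| ≤ C) → lB (fun n => x (n + 1)) = lB x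

/-- `MMmu m T Xs lB A = μ(A) := Σ_{j=0}^∞ lB((m_n(A ∩ Y_j))_{n ≥ 1})`. -/
noncomputable def MMmu {X : Type*} [MeasurableSpace X] (m : Measure X) (T : X → X)
    (Xs : ℕ → Set X) (lB : (ℕ → ℝ) → ℝ) (A : Set X) : ℝ :=
  ∑' j : ℕ, lB (fun n => mseq m T Xs (A ∩ MMY Xs j) (n + 1))

/-- boundedness predicate -/
def Bdd (x : ℕ → ℝ) : Prop := ∃ C, ∀ n, |x n| ≤ C

lemma Bdd.add {x y : ℕ → ℝ} (hx : Bdd x) (hy : Bdd y) : Bdd (x + y) := by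
  obtain ⟨C, hC⟩ := hx; obtain ⟨D, hD⟩ := hy
  exact ⟨C + D, fun n => (abs_add_le _ _).trans (add_le_add (hC n) (hD n))⟩

lemma Bdd.neg {x : ℕ → ℝ} (hx : Bdd x) : Bdd (-x) := by
  obtain ⟨C, hC⟩ := hx; exact ⟨C, fun n => by simpa using hC n⟩

lemma Bdd.sub {x y : ℕ → ℝ} (hx : Bdd x) (hy : Bdd y) : Bdd (x - y) := by
  simpa [sub_eq_add_neg] using hx.add hy.neg

lemma bdd_const (c : ℝ) : Bdd (fun _ => c) := ⟨|c|, fun _ => le_rfl⟩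


lemma lB_const {lB} (h : IsBanachLimit lB) (c : ℝ) : lB (fun _ => c) = c := by
  have := h.map_smul c (fun _ => 1) (bdd_const 1)
  have h2 : (c • fun (_ : ℕ) => (1:ℝ)) = fun _ => c := by funext n; simp
  rw [h2] at this
  simpa [h.map_one] using this

lemma lB_sub {lB} (h : IsBanachLimit lB) {x y : ℕ → ℝ} (hx : Bdd x) (hy : Bdd y) :
    lB (x - y) = lB x - lB y := by
  have h1 : lB (-y) = -lB y := by
    have := h.map_smul (-1) y hy
    simpa using this
  have := h.map_add x (-y) hx hy.neg
  rw [sub_eq_add_neg, this, h1, sub_eq_add_neg]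

lemma lB_mono {lB} (h : IsBanachLimit lB) {x y : ℕ → ℝ} (hx : Bdd x) (hy : Bdd y)
    (hle : ∀ n, x n ≤ y n) : lB x ≤ lB y := by
  have h0 : 0 ≤ lB (y - x) := h.nonneg _ (hy.sub hx) (fun n => by simpa using hle n)
  have := lB_sub h hy hx
  linarith [this ▸ h0]

lemma lB_abs_le {lB} (h : IsBanachLimit lB) {x : ℕ → ℝ} {c : ℝ} (hc : ∀ n, |x n| ≤ c) :
    |lB x| ≤ c := by
  have hx : Bdd x := ⟨c, hc⟩
  have hcb : Bdd (fun _ => c) := bdd_const c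
  have h1 : lB x ≤ c := by
    have := lB_mono h hx hcb (fun n => (abs_le.1 (hc n)).2)
    calc lB x ≤ lB (fun _ => c) := this
    _ = c := lB_const h c
  have h2 : -c ≤ lB x := by
    have hl : lB (fun _ => (-c : ℝ)) = -c := lB_const h (-c)
    have := lB_mono h (bdd_const (-c)) hx (fun n => (abs_le.1 (hc n)).1)
    linarith [hl ▸ this]
  exact abs_le.2 ⟨h2, h1⟩

lemma lB_shift_iter {lB} (h : IsBanachLimit lB) {x : ℕ → ℝ} (hx : Bdd x) (k : ℕ) :
    lB (fun n => x (n + k)) = lB x := by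
  induction k with
  | zero => simp
  | succ k ih =>
      have hshift : Bdd (fun n => x (n + k)) := by
        obtain ⟨C, hC⟩ := hx; exact ⟨C, fun n => hC _⟩
      have := h.shift_invariant (fun n => x (n + k)) hshift
      calc lB (fun n => x (n + (k+1))) = lB (fun n => x ((n + 1) + k)) := by
            congr 1; funext n; congr 1; omega
      _ = lB (fun n => x (n + k)) := this
      _ = lB x := ih

lemma lB_zero_of_tendsto {lB} (h : IsBanachLimit lB) {x : ℕ → ℝ} (hx : Bdd x)
    (hlim : Tendsto x atTop (nhds 0)) : lB x = 0 := by
  have key : ∀ ε : ℝ, 0 < ε → |lB x| ≤ ε := by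
    intro ε hε
    obtain ⟨k, hk⟩ := (Metric.tendsto_atTop.1 hlim ε hε)
    have hb : ∀ n, |x (n + k)| ≤ ε := fun n => by
      have := hk (n + k) (Nat.le_add_left _ _)
      simpa [Real.dist_eq] using this.le
    have := lB_abs_le h hb
    rwa [lB_shift_iter h hx k] at this
  by_contra hne
  have hpos : 0 < |lB x| := abs_pos.2 hne
  linarith [key (|lB x|/2) (by linarith)]

lemma lB_eq_of_sub_tendsto {lB} (h : IsBanachLimit lB) {x y : ℕ → ℝ} (hx : Bdd x) (hy : Bdd y)
    (hlim : Tendsto (x - y) atTop (nhds 0)) : lB x = lB y := by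
  have := lB_zero_of_tendsto h (hx.sub hy) hlim
  have h2 := lB_sub h hx hy
  linarith [h2 ▸ this]

lemma Bdd.finsetSum {ι : Type*} (s : Finset ι) (f : ι → ℕ → ℝ)
    (hf : ∀ i ∈ s, Bdd (f i)) : Bdd (∑ i ∈ s, f i) := by
  classical
  induction s using Finset.induction with
  | empty => rw [Finset.sum_empty]; exact bdd_const 0
  | insert _ _ hnm ih =>
      rename_i a t
      rw [Finset.sum_insert hnm]
      exact (hf a (Finset.mem_insert_self a t)).add
        (ih (fun i hi => hf i (Finset.mem_insert_of_mem hi)))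

lemma lB_finset_sum {lB} (h : IsBanachLimit lB) {ι : Type*} (s : Finset ι) (f : ι → ℕ → ℝ)
    (hf : ∀ i ∈ s, Bdd (f i)) : lB (∑ i ∈ s, f i) = ∑ i ∈ s, lB (f i) := by
  classical
  induction s using Finset.induction with
  | empty =>
      simp only [Finset.sum_empty]
      exact lB_const h 0
  | insert _ _ hnm ih =>
      rename_i a t
      rw [Finset.sum_insert hnm, Finset.sum_insert hnm,
        ← ih (fun i hi => hf i (Finset.mem_insert_of_mem hi))]
      exact h.map_add _ _ (hf a (Finset.mem_insert_self a t))
        (Bdd.finsetSum t f (fun i hi => hf i (Finset.mem_insert_of_mem hi)))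

section Mseq

variable {X : Type*} [MeasurableSpace X] (m : Measure X) (T : X → X) (Xs : ℕ → Set X)

/-- Numerator of `mseq`. -/
noncomputable def MMNum (A : Set X) (n : ℕ) : ℝ :=
  ∑ k ∈ Finset.range (n + 1), (m (T^[k] ⁻¹' A)).toReal

/-- Denominator of `mseq`. -/
noncomputable def MMD (n : ℕ) : ℝ :=
  ∑ k ∈ Finset.range (n + 1), (m (T^[k] ⁻¹' Xs 0)).toReal

lemma mseq_def (A : Set X) (n : ℕ) :
    mseq m T Xs A n = MMNum m T A n / MMD m T Xs n := rfl

variable {m T}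

lemma MMNum_nonneg (A : Set X) (n : ℕ) : 0 ≤ MMNum m T A n :=
  Finset.sum_nonneg fun _ _ => ENNReal.toReal_nonneg

lemma MMD_nonneg (n : ℕ) : 0 ≤ MMD m T Xs n :=
  Finset.sum_nonneg fun _ _ => ENNReal.toReal_nonneg

lemma MMNum_mono [IsFiniteMeasure m] {A B : Set X} (h : A ⊆ B) (n : ℕ) :
    MMNum m T A n ≤ MMNum m T B n :=
  Finset.sum_le_sum fun k _ =>
    ENNReal.toReal_mono (measure_ne_top m _) (measure_mono (preimage_mono h))

lemma mseq_nonneg (A : Set X) (n : ℕ) : 0 ≤ mseq m T Xs A n :=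
  div_nonneg (MMNum_nonneg A n) (MMD_nonneg Xs n)

lemma mseq_mono [IsFiniteMeasure m] {A B : Set X} (h : A ⊆ B) (n : ℕ) :
    mseq m T Xs A n ≤ mseq m T Xs B n := by
  rw [mseq_def, mseq_def]
  rcases eq_or_lt_of_le (MMD_nonneg (m := m) (T := T) Xs n) with hD | hD
  · rw [← hD]; simp
  · exact (div_le_div_iff_of_pos_right hD).2 (MMNum_mono h n)

lemma iter_preimage_null (hT : Measurable T) (hq : m.map T ≪ m) {A : Set X}
    (hA : MeasurableSet A) (h0 : m A = 0) (k : ℕ) : m (T^[k] ⁻¹' A) = 0 := by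
  induction k with
  | zero => simpa using h0
  | succ k ih =>
      have hmeas : MeasurableSet (T^[k] ⁻¹' A) := (hT.iterate k) hA
      have : T^[k + 1] ⁻¹' A = T ⁻¹' (T^[k] ⁻¹' A) := by
        rw [Function.iterate_succ]
        exact Set.preimage_comp
      rw [this, ← Measure.map_apply hT hmeas]
      exact hq ih

lemma mseq_null (hT : Measurable T) (hq : m.map T ≪ m) {A : Set X}
    (hA : MeasurableSet A) (h0 : m A = 0) (n : ℕ) : mseq m T Xs A n = 0 := by
  rw [mseq_def]
  have : MMNum m T A n = 0 := by
    apply Finset.sum_eq_zero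
    intro k _
    rw [iter_preimage_null hT hq hA h0 k]
    simp
  rw [this, zero_div]

lemma mseq_biUnion [IsFiniteMeasure m] (hT : Measurable T) {ι : Type*} (s : Finset ι)
    (E : ι → Set X) (hmeas : ∀ i ∈ s, MeasurableSet (E i))
    (hdisj : (s : Set ι).PairwiseDisjoint E) (n : ℕ) :
    mseq m T Xs (⋃ i ∈ s, E i) n = ∑ i ∈ s, mseq m T Xs (E i) n := by
  have key : ∀ k : ℕ, (m (T^[k] ⁻¹' ⋃ i ∈ s, E i)).toReal
      = ∑ i ∈ s, (m (T^[k] ⁻¹' E i)).toReal := by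
    intro k
    have h1 : T^[k] ⁻¹' ⋃ i ∈ s, E i = ⋃ i ∈ s, T^[k] ⁻¹' E i := by
      simp [Set.preimage_iUnion]
    have hd2 : (s : Set ι).PairwiseDisjoint (fun i => T^[k] ⁻¹' E i) := by
      intro i hi j hj hij
      exact (hdisj hi hj hij).preimage _
    rw [h1, measure_biUnion_finset hd2 (fun i hi => (hT.iterate k) (hmeas i hi))]
    exact ENNReal.toReal_sum fun i _ => measure_ne_top m _
  have hnum : MMNum m T (⋃ i ∈ s, E i) n = ∑ i ∈ s, MMNum m T (E i) n := by
    unfold MMNum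
    rw [Finset.sum_comm]
    exact Finset.sum_congr rfl fun k _ => key k
  rw [mseq_def, hnum, Finset.sum_div]
  exact Finset.sum_congr rfl fun i _ => rfl


lemma mseq_union [IsFiniteMeasure m] (hT : Measurable T) {E F : Set X}
    (hF : MeasurableSet F) (hd : Disjoint E F) (n : ℕ) :
    mseq m T Xs (E ∪ F) n = mseq m T Xs E n + mseq m T Xs F n := by
  have key : ∀ k : ℕ, (m (T^[k] ⁻¹' (E ∪ F))).toReal
      = (m (T^[k] ⁻¹' E)).toReal + (m (T^[k] ⁻¹' F)).toReal := by
    intro k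
    rw [Set.preimage_union, measure_union (hd.preimage _) ((hT.iterate k) hF),
      ENNReal.toReal_add (measure_ne_top m _) (measure_ne_top m _)]
  have hnum : MMNum m T (E ∪ F) n = MMNum m T E n + MMNum m T F n := by
    unfold MMNum
    rw [← Finset.sum_add_distrib]
    exact Finset.sum_congr rfl fun k _ => key k
  rw [mseq_def, mseq_def, mseq_def, hnum, add_div]

end Mseq


lemma hasSum_of_tendsto_sum_range {f : ℕ → ℝ} {L : ℝ} (h0 : ∀ i, 0 ≤ f i)
    (h : Tendsto (fun M => ∑ i ∈ Finset.range M, f i) atTop (nhds L)) : HasSum f L := by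
  have hmono : Monotone (fun M => ∑ i ∈ Finset.range M, f i) := by
    intro a b hab
    exact Finset.sum_le_sum_of_subset_of_nonneg (Finset.range_subset_range.2 hab)
      (fun i _ _ => h0 i)
  have hle : ∀ M, ∑ i ∈ Finset.range M, f i ≤ L := hmono.ge_of_tendsto h
  have hsum : Summable f := summable_of_sum_range_le h0 hle
  have h2 := hsum.hasSum.tendsto_sum_nat
  have : ∑' i, f i = L := tendsto_nhds_unique h2 h
  exact this ▸ hsum.hasSum

lemma real_tsum_eq_toReal_ofReal {g : ℕ → ℝ} (hg : ∀ i, 0 ≤ g i) :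
    ∑' i, g i = (∑' i, ENNReal.ofReal (g i)).toReal := by
  by_cases hs : Summable g
  · rw [← ENNReal.ofReal_tsum_of_nonneg hg hs, ENNReal.toReal_ofReal (tsum_nonneg hg)]
  · rw [tsum_eq_zero_of_not_summable hs]
    have htop : ∑' i, ENNReal.ofReal (g i) = ⊤ := by
      by_contra hne
      exact hs ((ENNReal.summable_toReal hne).congr
        (fun i => ENNReal.toReal_ofReal (hg i)))
    rw [htop]
    simp

lemma tsum_eq_of_hasSum_rows_cols {a : ℕ → ℕ → ℝ} {L1 L2 : ℕ → ℝ}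
    (h0 : ∀ i j, 0 ≤ a i j) (hrow : ∀ i, HasSum (a i) (L1 i))
    (hcol : ∀ j, HasSum (fun i => a i j) (L2 j)) :
    ∑' i, L1 i = ∑' j, L2 j := by
  have hL1n : ∀ i, 0 ≤ L1 i := fun i => by
    rw [← (hrow i).tsum_eq]; exact tsum_nonneg (h0 i)
  have hL2n : ∀ j, 0 ≤ L2 j := fun j => by
    rw [← (hcol j).tsum_eq]; exact tsum_nonneg (fun i => h0 i j)
  have hL1 : ∀ i, ENNReal.ofReal (L1 i) = ∑' j, ENNReal.ofReal (a i j) := fun i => by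
    rw [← (hrow i).tsum_eq, ENNReal.ofReal_tsum_of_nonneg (h0 i) (hrow i).summable]
  have hL2 : ∀ j, ENNReal.ofReal (L2 j) = ∑' i, ENNReal.ofReal (a i j) := fun j => by
    rw [← (hcol j).tsum_eq,
      ENNReal.ofReal_tsum_of_nonneg (fun i => h0 i j) (hcol j).summable]
  have hswap : ∑' i, ENNReal.ofReal (L1 i) = ∑' j, ENNReal.ofReal (L2 j) := by
    simp_rw [hL1, hL2]
    exact ENNReal.tsum_comm
  rw [real_tsum_eq_toReal_ofReal hL1n, real_tsum_eq_toReal_ofReal hL2n, hswap]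

section MM

variable {X : Type*} [MeasurableSpace X] {m : Measure X} [IsProbabilityMeasure m]
  {T : X → X} {Xs : ℕ → Set X} {K : ℕ → ℝ} (hMM : MarcoMartens m T Xs K)

lemma meas_toReal_le_one (s : Set X) : (m s).toReal ≤ 1 := by
  have h := ENNReal.toReal_mono (a := m s) (b := 1) (by simp) prob_le_one
  simpa using h

lemma MMNum_nonneg' (A : Set X) (n : ℕ) : 0 ≤ MMNum m T A n :=
  Finset.sum_nonneg fun _ _ => ENNReal.toReal_nonneg

include hMM

lemma mX0_pos : 0 < (m (Xs 0)).toReal := by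
  obtain ⟨k, hk⟩ := hMM.cond3 0 0
  have h1 : 0 < m (Xs 0) := lt_of_lt_of_le hk (measure_mono inter_subset_left)
  exact ENNReal.toReal_pos h1.ne' (measure_ne_top m _)

omit hMM in
lemma MMD_ge_first (n : ℕ) : (m (Xs 0)).toReal ≤ MMD m T Xs n := by
  unfold MMD
  have h0 : (0:ℕ) ∈ Finset.range (n+1) := by simp
  have h := Finset.single_le_sum (f := fun k => (m (T^[k] ⁻¹' Xs 0)).toReal)
    (fun k _ => ENNReal.toReal_nonneg) h0
  simpa using h

lemma MMD_pos (n : ℕ) : 0 < MMD m T Xs n :=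
  lt_of_lt_of_le (mX0_pos hMM) (MMD_ge_first n)

omit hMM in
lemma MMD_add_le (n r : ℕ) : MMD m T Xs (n + r) ≤ MMD m T Xs n + r := by
  unfold MMD
  rw [show n + r + 1 = (n + 1) + r by ring, Finset.sum_range_add]
  have h2 : ∑ i ∈ Finset.range r, (m (T^[n + 1 + i] ⁻¹' Xs 0)).toReal ≤ r := by
    calc ∑ i ∈ Finset.range r, (m (T^[n + 1 + i] ⁻¹' Xs 0)).toReal
        ≤ ∑ i ∈ Finset.range r, 1 := Finset.sum_le_sum fun i _ => meas_toReal_le_one _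
      _ = r := by simp
  linarith

lemma MMD_tendsto : Tendsto (MMD m T Xs) atTop atTop := by
  have h1 : Tendsto (fun N => ∑ k ∈ Finset.range N, m (T^[k] ⁻¹' Xs 0)) atTop (nhds ⊤) := by
    simpa [hMM.cond5] using ENNReal.tendsto_nat_tsum (fun k => m (T^[k] ⁻¹' Xs 0))
  rw [tendsto_atTop]
  intro b
  obtain ⟨q, hq⟩ := exists_nat_ge b
  have h2 : ∀ᶠ N in atTop, (q : ENNReal) < ∑ k ∈ Finset.range N, m (T^[k] ⁻¹' Xs 0) :=
    h1.eventually (eventually_gt_nhds (by simp : (q:ENNReal) < ⊤))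
  have h3 := (tendsto_add_atTop_nat 1).eventually h2
  refine h3.mono fun n hn => ?_
  have hfin : ∑ k ∈ Finset.range (n + 1), m (T^[k] ⁻¹' Xs 0) ≠ ⊤ :=
    (ENNReal.sum_lt_top.2 fun k _ => measure_lt_top m _).ne
  have h4 : (q : ℝ) ≤ (∑ k ∈ Finset.range (n + 1), m (T^[k] ⁻¹' Xs 0)).toReal := by
    have := ENNReal.toReal_mono hfin hn.le
    simpa using this
  have h5 : MMD m T Xs n = (∑ k ∈ Finset.range (n + 1), m (T^[k] ⁻¹' Xs 0)).toReal := by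
    unfold MMD
    rw [ENNReal.toReal_sum fun k _ => measure_ne_top m _]
  rw [h5]; linarith


lemma MMNum_preimage_le (G : Set X) (n : ℕ) :
    MMNum m T (T ⁻¹' G) n ≤ MMNum m T G (n + 1) := by
  have hiter : ∀ k : ℕ, T^[k] ⁻¹' (T ⁻¹' G) = T^[k + 1] ⁻¹' G := by
    intro k
    rw [Function.iterate_succ', Set.preimage_comp]
  have h1 : MMNum m T G (n + 1)
      = ∑ k ∈ Finset.range (n + 1), (m (T^[k + 1] ⁻¹' G)).toReal + (m G).toReal := by
    unfold MMNum
    rw [Finset.sum_range_succ' (fun k => (m (T^[k] ⁻¹' G)).toReal) (n + 1)]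
    simp
  have h2 : MMNum m T (T ⁻¹' G) n
      = ∑ k ∈ Finset.range (n + 1), (m (T^[k + 1] ⁻¹' G)).toReal := by
    unfold MMNum
    exact Finset.sum_congr rfl fun k _ => by rw [hiter k]
  rw [h2, h1]
  have : (0:ℝ) ≤ (m G).toReal := ENNReal.toReal_nonneg
  linarith

lemma MM_bound (j : ℕ) : ∃ C : ℝ, 0 < C ∧ ∀ G : Set X, MeasurableSet G → G ⊆ Xs j →
    (∀ n, mseq m T Xs G n ≤ C * (m G).toReal) ∧
    (∀ n, mseq m T Xs (T ⁻¹' G) n ≤ C * (m G).toReal) := by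
  obtain ⟨r, hWpos⟩ := hMM.cond3 j 0
  set W := Xs j ∩ T^[r] ⁻¹' Xs 0 with hW
  have hWmeas : MeasurableSet W :=
    (hMM.meas_Xs j).inter ((hMM.measurable_T.iterate r) (hMM.meas_Xs 0))
  set w := (m W).toReal with hwdef
  have hw : 0 < w := ENNReal.toReal_pos hWpos.ne' (measure_ne_top m _)
  set d := (m (Xs 0)).toReal with hddef
  have hd : 0 < d := mX0_pos hMM
  set C₀ : ℝ := K j * (1 + r / d) / w with hC0def
  have hK : (1:ℝ) ≤ K j := hMM.one_le_K j
  have hC₀ : 0 < C₀ := by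
    rw [hC0def]
    apply div_pos _ hw
    have : (0:ℝ) ≤ r / d := div_nonneg (Nat.cast_nonneg r) hd.le
    nlinarith
  clear_value w d C₀
  have claim1 : ∀ G : Set X, MeasurableSet G → G ⊆ Xs j → ∀ n,
      MMNum m T G n ≤ C₀ * (m G).toReal * MMD m T Xs n := by
    intro G hG hGsub n
    have perk : ∀ k : ℕ, (m (T^[k] ⁻¹' G)).toReal * w
        ≤ K j * ((m G).toReal * (m (T^[r + k] ⁻¹' Xs 0)).toReal) := by
      intro k
      have h4 := hMM.cond4 j G W hG hWmeas hGsub inter_subset_left k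
      have hcomp : T^[k] ⁻¹' (T^[r] ⁻¹' Xs 0) = T^[r + k] ⁻¹' Xs 0 := by
        rw [Function.iterate_add, Set.preimage_comp]
      have h5 : m (T^[k] ⁻¹' W) ≤ m (T^[r + k] ⁻¹' Xs 0) := by
        rw [← hcomp]
        exact measure_mono (preimage_mono inter_subset_right)
      have h6 : m (T^[k] ⁻¹' G) * m W
          ≤ ENNReal.ofReal (K j) * (m G * m (T^[r + k] ⁻¹' Xs 0)) := by
        refine h4.trans ?_
        exact mul_le_mul_right (mul_le_mul_right h5 _) _
      have hne : ENNReal.ofReal (K j) * (m G * m (T^[r + k] ⁻¹' Xs 0)) ≠ ⊤ :=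
        ENNReal.mul_ne_top ENNReal.ofReal_ne_top
          (ENNReal.mul_ne_top (measure_ne_top m _) (measure_ne_top m _))
      have h7 := ENNReal.toReal_mono hne h6
      rw [ENNReal.toReal_mul, ENNReal.toReal_mul, ENNReal.toReal_mul,
        ENNReal.toReal_ofReal (by linarith : (0:ℝ) ≤ K j)] at h7
      rw [hwdef]; exact h7
    have hsum : MMNum m T G n * w
        ≤ K j * (m G).toReal * ∑ k ∈ Finset.range (n + 1),
            (m (T^[r + k] ⁻¹' Xs 0)).toReal := by
      rw [Finset.mul_sum]
      unfold MMNum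
      rw [Finset.sum_mul]
      refine Finset.sum_le_sum fun k _ => ?_
      have := perk k
      nlinarith [this]
    have hshift : ∑ k ∈ Finset.range (n + 1), (m (T^[r + k] ⁻¹' Xs 0)).toReal
        ≤ MMD m T Xs (n + r) := by
      have he : ∑ k ∈ Finset.Ico r (r + (n + 1)), (m (T^[k] ⁻¹' Xs 0)).toReal
          = ∑ k ∈ Finset.range (n + 1), (m (T^[r + k] ⁻¹' Xs 0)).toReal := by
        rw [Finset.sum_Ico_eq_sum_range]
        simp
      rw [← he]
      unfold MMD
      refine Finset.sum_le_sum_of_subset_of_nonneg ?_ (fun k _ _ => ENNReal.toReal_nonneg)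
      intro k hk
      simp only [Finset.mem_Ico] at hk
      simp only [Finset.mem_range]
      omega
    have hDD : MMD m T Xs (n + r) ≤ (1 + r / d) * MMD m T Xs n := by
      have h1 := MMD_add_le (m := m) (T := T) (Xs := Xs) n r
      have h2 : d ≤ MMD m T Xs n := by rw [hddef]; exact MMD_ge_first n
      have h3 : (r : ℝ) = (r / d) * d := by field_simp
      have h4 : (r / d) * d ≤ (r / d) * MMD m T Xs n :=
        mul_le_mul_of_nonneg_left h2 (div_nonneg (Nat.cast_nonneg r) hd.le)
      nlinarith
    have hGn : (0:ℝ) ≤ (m G).toReal := ENNReal.toReal_nonneg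
    have hcw : C₀ * w = K j * (1 + r / d) := by
      rw [hC0def]; exact div_mul_cancel₀ _ hw.ne'
    rw [← mul_le_mul_iff_of_pos_right hw]
    have hKG : (0:ℝ) ≤ K j * (m G).toReal := by nlinarith
    calc MMNum m T G n * w
        ≤ K j * (m G).toReal * ∑ k ∈ Finset.range (n + 1),
            (m (T^[r + k] ⁻¹' Xs 0)).toReal := hsum
      _ ≤ K j * (m G).toReal * MMD m T Xs (n + r) := by nlinarith [hshift]
      _ ≤ K j * (m G).toReal * ((1 + r / d) * MMD m T Xs n) := by
          have hDn : 0 ≤ MMD m T Xs (n + r) := by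
            have := MMD_pos hMM (n + r); linarith
          nlinarith [hDD]
      _ = C₀ * (m G).toReal * MMD m T Xs n * w := by
          linear_combination (-((m G).toReal * MMD m T Xs n)) * hcw
  refine ⟨(1 + 1 / d) * C₀, by positivity, fun G hG hGsub => ?_⟩
  have hGn : (0:ℝ) ≤ (m G).toReal := ENNReal.toReal_nonneg
  have hdd : (1:ℝ) ≤ 1 + 1 / d := by
    have : (0:ℝ) ≤ 1 / d := by positivity
    linarith
  constructor
  · intro n
    have h1 := claim1 G hG hGsub n
    have hDn := MMD_pos hMM n
    rw [mseq_def, div_le_iff₀ hDn]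
    nlinarith [h1, mul_nonneg (mul_nonneg hC₀.le hGn) hDn.le]
  · intro n
    have hDn := MMD_pos hMM n
    have h1 : MMNum m T (T ⁻¹' G) n ≤ C₀ * (m G).toReal * MMD m T Xs (n + 1) :=
      (MMNum_preimage_le hMM G n).trans (claim1 G hG hGsub (n + 1))
    have h2 : MMD m T Xs (n + 1) ≤ MMD m T Xs n + 1 := by
      exact_mod_cast MMD_add_le (m := m) (T := T) (Xs := Xs) n 1
    have h3 : d ≤ MMD m T Xs n := by rw [hddef]; exact MMD_ge_first n
    rw [mseq_def, div_le_iff₀ hDn]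
    have hC0G : (0:ℝ) ≤ C₀ * (m G).toReal := mul_nonneg hC₀.le hGn
    have key : MMD m T Xs n + 1 ≤ (1 + 1 / d) * MMD m T Xs n := by
      have h4 : (1:ℝ) = (1 / d) * d := by field_simp
      have h5 : (1 / d) * d ≤ (1 / d) * MMD m T Xs n :=
        mul_le_mul_of_nonneg_left h3 (by positivity)
      nlinarith
    calc MMNum m T (T ⁻¹' G) n ≤ C₀ * (m G).toReal * MMD m T Xs (n + 1) := h1
      _ ≤ C₀ * (m G).toReal * (MMD m T Xs n + 1) := by nlinarith
      _ ≤ C₀ * (m G).toReal * ((1 + 1 / d) * MMD m T Xs n) := by nlinarith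
      _ = (1 + 1 / d) * C₀ * (m G).toReal * MMD m T Xs n := by ring

lemma mseq_preimage_sub_abs (B : Set X) (n : ℕ) :
    |mseq m T Xs (T ⁻¹' B) n - mseq m T Xs B n| ≤ 1 / MMD m T Xs n := by
  have hDn := MMD_pos hMM n
  have hiter : ∀ k : ℕ, T^[k] ⁻¹' (T ⁻¹' B) = T^[k + 1] ⁻¹' B := by
    intro k
    rw [Function.iterate_succ', Set.preimage_comp]
  have h1 : MMNum m T (T ⁻¹' B) n = MMNum m T B n
      + (m (T^[n + 1] ⁻¹' B)).toReal - (m B).toReal := by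
    have ha : MMNum m T B (n + 1)
        = ∑ k ∈ Finset.range (n + 1), (m (T^[k + 1] ⁻¹' B)).toReal + (m B).toReal := by
      unfold MMNum
      rw [Finset.sum_range_succ' (fun k => (m (T^[k] ⁻¹' B)).toReal) (n + 1)]
      simp
    have hb : MMNum m T B (n + 1) = MMNum m T B n + (m (T^[n + 1] ⁻¹' B)).toReal := by
      unfold MMNum
      rw [Finset.sum_range_succ]
    have hc : MMNum m T (T ⁻¹' B) n
        = ∑ k ∈ Finset.range (n + 1), (m (T^[k + 1] ⁻¹' B)).toReal := by
      unfold MMNum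
      exact Finset.sum_congr rfl fun k _ => by rw [hiter k]
    rw [hc]
    linarith [ha ▸ hb]
  rw [mseq_def, mseq_def, h1]
  have h2 : (MMNum m T B n + (m (T^[n + 1] ⁻¹' B)).toReal - (m B).toReal)
      / MMD m T Xs n - MMNum m T B n / MMD m T Xs n
      = ((m (T^[n + 1] ⁻¹' B)).toReal - (m B).toReal) / MMD m T Xs n := by
    rw [div_sub_div_same]
    congr 1
    ring
  rw [h2, abs_div, abs_of_pos hDn]
  have habs : |(m (T^[n + 1] ⁻¹' B)).toReal - (m B).toReal| ≤ 1 := by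
    rw [abs_sub_le_iff]
    constructor
    · linarith [meas_toReal_le_one (m := m) (T^[n + 1] ⁻¹' B),
        ENNReal.toReal_nonneg (a := m B)]
    · linarith [meas_toReal_le_one (m := m) B,
        ENNReal.toReal_nonneg (a := m (T^[n + 1] ⁻¹' B))]
  exact (div_le_div_iff_of_pos_right hDn).2 habs

end MM


theorem stmt13' {X : Type*} [MeasurableSpace X] (m : Measure X) [IsProbabilityMeasure m]
    (T : X → X) (Xs : ℕ → Set X) (K : ℕ → ℝ) (hMM : MarcoMartens m T Xs K)
    (lB : (ℕ → ℝ) → ℝ) (hlB : IsBanachLimit lB) :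
    ∀ A : Set X, MeasurableSet A →
      MMmu m T Xs lB (T ⁻¹' A) = MMmu m T Xs lB A := by
  classical
  intro A hA
  have hTmeas := hMM.measurable_T
  set Y : ℕ → Set X := MMY Xs with hYdef
  set seq : Set X → ℕ → ℝ := fun E n => mseq m T Xs E (n + 1) with hseqdef
  have hYmeas : ∀ i, MeasurableSet (Y i) := fun i =>
    (hMM.meas_Xs i).diff (MeasurableSet.biUnion (to_countable _) fun j _ => hMM.meas_Xs j)
  have hYsub : ∀ i, Y i ⊆ Xs i := fun i => diff_subset
  have hYdisj : ∀ i j, i ≠ j → Disjoint (Y i) (Y j) := by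
    have key : ∀ i j, i < j → Disjoint (Y i) (Y j) := by
      intro i j hij
      rw [Set.disjoint_right]
      intro x hxj hxi
      exact hxj.2 (mem_biUnion (mem_Iio.2 hij) (hYsub i hxi))
    intro i j hij
    rcases hij.lt_or_gt with h | h
    · exact key i j h
    · exact (key j i h).symm
  have hYunion : (⋃ i, Y i) = ⋃ i, Xs i := by
    refine Subset.antisymm (iUnion_mono hYsub) ?_
    intro x hx
    rw [mem_iUnion] at hx ⊢
    obtain ⟨i, hi⟩ := hx
    have hex : ∃ n, x ∈ Xs n := ⟨i, hi⟩
    refine ⟨Nat.find hex, Nat.find_spec hex, ?_⟩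
    simp only [mem_iUnion, mem_Iio, exists_prop, not_exists, not_and]
    intro k hk
    exact Nat.find_min hex hk
  set S : Set X := T ⁻¹' A with hSdef
  have hSmeas : MeasurableSet S := hTmeas hA
  set TailY : ℕ → Set X := fun M => ⋃ j ∈ Set.Ici M, Y j with hTaildef
  have hTailmeas : ∀ M, MeasurableSet (TailY M) := fun M =>
    MeasurableSet.biUnion (to_countable _) fun j _ => hYmeas j
  choose Cb hCb0 hCb using fun j => MM_bound hMM j
  -- boundedness of seq for subsets of X_j
  have hBdd : ∀ j (E : Set X), MeasurableSet E → E ⊆ Xs j → Bdd (seq E) := by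
    intro j E hE hEsub
    refine ⟨Cb j, fun n => ?_⟩
    rw [abs_of_nonneg (mseq_nonneg _ _ _)]
    calc mseq m T Xs E (n + 1) ≤ Cb j * (m E).toReal :=
        (hCb j E hE hEsub).1 (n + 1)
      _ ≤ Cb j * 1 := by
          have := meas_toReal_le_one (m := m) E
          nlinarith [(hCb0 j)]
      _ = Cb j := mul_one _
  have hBddT : ∀ j (E : Set X), MeasurableSet E → E ⊆ Xs j → Bdd (seq (T ⁻¹' E)) := by
    intro j E hE hEsub
    refine ⟨Cb j, fun n => ?_⟩
    rw [abs_of_nonneg (mseq_nonneg _ _ _)]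
    calc mseq m T Xs (T ⁻¹' E) (n + 1) ≤ Cb j * (m E).toReal :=
        (hCb j E hE hEsub).2 (n + 1)
      _ ≤ Cb j * 1 := by
          have := meas_toReal_le_one (m := m) E
          nlinarith [(hCb0 j)]
      _ = Cb j := mul_one _
  have hBddSub : ∀ j (E F : Set X), MeasurableSet E → E ⊆ Xs j → F ⊆ T ⁻¹' E →
      Bdd (seq F) := by
    intro j E F hE hEsub hFsub
    obtain ⟨C, hC⟩ := hBddT j E hE hEsub
    refine ⟨C, fun n => ?_⟩
    rw [abs_of_nonneg (mseq_nonneg _ _ _)]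
    calc mseq m T Xs F (n + 1) ≤ mseq m T Xs (T ⁻¹' E) (n + 1) := mseq_mono _ hFsub _
      _ ≤ C := (abs_le.1 (hC n)).2
  -- claim alpha
  have claimα : ∀ j : ℕ, lB (seq (A ∩ Y j)) = lB (seq (T ⁻¹' (A ∩ Y j))) := by
    intro j
    have hEmeas : MeasurableSet (A ∩ Y j) := hA.inter (hYmeas j)
    have hEsub : A ∩ Y j ⊆ Xs j := fun x hx => hYsub j hx.2
    have hb1 : Bdd (seq (A ∩ Y j)) := hBdd j _ hEmeas hEsub
    have hb2 : Bdd (seq (T ⁻¹' (A ∩ Y j))) := hBddT j _ hEmeas hEsub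
    refine (lB_eq_of_sub_tendsto hlB hb2 hb1 ?_).symm
    have hbound : ∀ n, ‖(seq (T ⁻¹' (A ∩ Y j)) - seq (A ∩ Y j)) n‖
        ≤ 1 / MMD m T Xs (n + 1) := by
      intro n
      have := mseq_preimage_sub_abs hMM (A ∩ Y j) (n + 1)
      simpa [Real.norm_eq_abs] using this
    have hg : Tendsto (fun n => 1 / MMD m T Xs (n + 1)) atTop (nhds 0) := by
      have hD := (MMD_tendsto hMM).comp (tendsto_add_atTop_nat 1)
      simpa [one_div, Function.comp_def, Pi.inv_def] using hD.inv_tendsto_atTop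
    exact squeeze_zero_norm hbound hg
  -- claim beta (columns)
  have claimβ : ∀ j : ℕ, HasSum (fun i => lB (seq (S ∩ Y i ∩ T ⁻¹' (Y j))))
      (lB (seq (T ⁻¹' (A ∩ Y j)))) := by
    intro j
    set E : Set X := A ∩ Y j with hEdef
    have hEmeas : MeasurableSet E := hA.inter (hYmeas j)
    have hEsub : E ⊆ Xs j := fun x hx => hYsub j hx.2
    set Q : Set X := T ⁻¹' E with hQdef
    have hQmeas : MeasurableSet Q := hTmeas hEmeas
    have hpiece : ∀ i, S ∩ Y i ∩ T ⁻¹' (Y j) = Q ∩ Y i := by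
      intro i
      rw [hQdef, hEdef, preimage_inter, ← hSdef, inter_right_comm]
    have hnull : ∀ n, mseq m T Xs (Q \ ⋃ k, Y k) n = 0 := by
      have hsub : Q \ ⋃ k, Y k ⊆ univ \ ⋃ k, Xs k := by
        intro x hx
        rw [← hYunion]
        exact ⟨trivial, hx.2⟩
      have h0 : m (Q \ ⋃ k, Y k) = 0 := measure_mono_null hsub hMM.cover
      exact fun n => mseq_null Xs hTmeas hMM.quasi_invariant
        (hQmeas.diff (MeasurableSet.iUnion fun k => hYmeas k)) h0 n
    have hfun : ∀ M n, mseq m T Xs Q n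
        = (∑ i ∈ Finset.range M, mseq m T Xs (Q ∩ Y i) n)
          + mseq m T Xs (Q ∩ TailY M) n := by
      intro M n
      have hdecomp : Q = (⋃ i ∈ Finset.range M, (Q ∩ Y i))
          ∪ ((Q ∩ TailY M) ∪ (Q \ ⋃ k, Y k)) := by
        ext x
        constructor
        · intro hx
          by_cases hxU : x ∈ ⋃ k, Y k
          · obtain ⟨i, hi⟩ := mem_iUnion.1 hxU
            by_cases hiM : i < M
            · exact Or.inl (mem_biUnion (Finset.mem_range.2 hiM) ⟨hx, hi⟩)
            · exact Or.inr (Or.inl ⟨hx, mem_biUnion (mem_Ici.2 (le_of_not_gt hiM)) hi⟩)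
          · exact Or.inr (Or.inr ⟨hx, hxU⟩)
        · rintro (hx | hx | hx)
          · obtain ⟨i, _, hxQY⟩ := mem_iUnion₂.1 hx
            exact hxQY.1
          · exact hx.1
          · exact hx.1
      have hd2 : Disjoint (Q ∩ TailY M) (Q \ ⋃ k, Y k) := by
        rw [Set.disjoint_left]
        rintro x ⟨-, hxT⟩ ⟨-, hxU⟩
        obtain ⟨k, -, hk⟩ := mem_iUnion₂.1 hxT
        exact hxU (mem_iUnion.2 ⟨k, hk⟩)
      have hd1 : Disjoint (⋃ i ∈ Finset.range M, (Q ∩ Y i))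
          ((Q ∩ TailY M) ∪ (Q \ ⋃ k, Y k)) := by
        rw [Set.disjoint_left]
        intro x hxL hxR
        obtain ⟨i, hiM, -, hxYi⟩ := mem_iUnion₂.1 hxL
        rcases hxR with ⟨-, hxT⟩ | ⟨-, hxU⟩
        · obtain ⟨k, hkM, hxYk⟩ := mem_iUnion₂.1 hxT
          have hik : i ≠ k := by
            have h1 := Finset.mem_range.1 hiM
            have h2 := mem_Ici.1 hkM
            omega
          exact (Set.disjoint_left.1 (hYdisj i k hik) hxYi) hxYk
        · exact hxU (mem_iUnion.2 ⟨i, hxYi⟩)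
      have hdpw : (↑(Finset.range M) : Set ℕ).PairwiseDisjoint (fun i => Q ∩ Y i) := by
        intro a _ b _ hab
        exact ((hYdisj a b hab).inter_left' Q).inter_right' Q
      have hmR : MeasurableSet ((Q ∩ TailY M) ∪ (Q \ ⋃ k, Y k)) :=
        (hQmeas.inter (hTailmeas M)).union
          (hQmeas.diff (MeasurableSet.iUnion fun k => hYmeas k))
      have e1 : mseq m T Xs Q n
          = mseq m T Xs (⋃ i ∈ Finset.range M, (Q ∩ Y i)) n
            + mseq m T Xs ((Q ∩ TailY M) ∪ (Q \ ⋃ k, Y k)) n := by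
        nth_rewrite 1 [hdecomp]
        exact mseq_union Xs hTmeas hmR hd1 n
      have e2 : mseq m T Xs ((Q ∩ TailY M) ∪ (Q \ ⋃ k, Y k)) n
          = mseq m T Xs (Q ∩ TailY M) n := by
        rw [mseq_union Xs hTmeas
          (hQmeas.diff (MeasurableSet.iUnion fun k => hYmeas k)) hd2 n, hnull n,
          add_zero]
      have e3 : mseq m T Xs (⋃ i ∈ Finset.range M, (Q ∩ Y i)) n
          = ∑ i ∈ Finset.range M, mseq m T Xs (Q ∩ Y i) n :=
        mseq_biUnion Xs hTmeas (Finset.range M) _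
          (fun i _ => hQmeas.inter (hYmeas i)) hdpw n
      rw [e1, e2, e3]
    have hBddQY : ∀ i, Bdd (seq (Q ∩ Y i)) := fun i =>
      hBdd i _ (hQmeas.inter (hYmeas i)) (fun x hx => hYsub i hx.2)
    have hBddQT : ∀ M, Bdd (seq (Q ∩ TailY M)) := fun M =>
      hBddSub j E _ hEmeas hEsub inter_subset_left
    have hlB_eq : ∀ M, lB (seq Q)
        = (∑ i ∈ Finset.range M, lB (seq (Q ∩ Y i))) + lB (seq (Q ∩ TailY M)) := by
      intro M
      have hfeq : seq Q = (∑ i ∈ Finset.range M, seq (Q ∩ Y i)) + seq (Q ∩ TailY M) := by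
        funext n
        have := hfun M (n + 1)
        simpa [hseqdef, Finset.sum_apply] using this
      rw [hfeq, hlB.map_add _ _ (Bdd.finsetSum _ _ (fun i _ => hBddQY i)) (hBddQT M),
        lB_finset_sum hlB _ _ (fun i _ => hBddQY i)]
    have hremnn : ∀ M, 0 ≤ lB (seq (Q ∩ TailY M)) := fun M =>
      hlB.nonneg _ (hBddQT M) (fun n => mseq_nonneg _ _ _)
    have hrem : ∀ M, lB (seq (Q ∩ TailY M)) ≤ Cb j * (m (T '' TailY M)).toReal := by
      intro M
      set G : Set X := Y j ∩ T '' TailY M with hGdef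
      have hGmeas : MeasurableSet G := (hYmeas j).inter (hMM.image_meas _ (hTailmeas M))
      have hGsub : G ⊆ Xs j := fun x hx => hYsub j hx.1
      have hsub : Q ∩ TailY M ⊆ T ⁻¹' G := by
        rintro x ⟨hxQ, hxT⟩
        exact ⟨hxQ.2, ⟨x, hxT, rfl⟩⟩
      have hb : ∀ n, seq (Q ∩ TailY M) n ≤ Cb j * (m G).toReal := by
        intro n
        calc seq (Q ∩ TailY M) n ≤ mseq m T Xs (T ⁻¹' G) (n + 1) :=
            mseq_mono _ hsub _
          _ ≤ Cb j * (m G).toReal := (hCb j G hGmeas hGsub).2 (n + 1)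
      have hlBle : lB (seq (Q ∩ TailY M)) ≤ Cb j * (m G).toReal := by
        have := lB_mono hlB (hBddQT M) (bdd_const _) hb
        rwa [lB_const hlB] at this
      refine hlBle.trans ?_
      have h1 : (m G).toReal ≤ (m (T '' TailY M)).toReal :=
        ENNReal.toReal_mono (measure_ne_top m _) (measure_mono inter_subset_right)
      nlinarith [hCb0 j]
    have hρ : Tendsto (fun M => Cb j * (m (T '' TailY M)).toReal) atTop (nhds 0) := by
      have h6 := hMM.cond6
      have h7 : Tendsto (fun M => (m (T '' TailY M)).toReal) atTop (nhds 0) := by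
        have := (ENNReal.tendsto_toReal (by simp : (0 : ENNReal) ≠ ⊤)).comp h6
        exact this
      simpa using h7.const_mul (Cb j)
    have hremto : Tendsto (fun M => lB (seq (Q ∩ TailY M))) atTop (nhds 0) :=
      squeeze_zero hremnn hrem hρ
    have hpartial : Tendsto (fun M => ∑ i ∈ Finset.range M, lB (seq (Q ∩ Y i)))
        atTop (nhds (lB (seq Q))) := by
      have heq : (fun M => ∑ i ∈ Finset.range M, lB (seq (Q ∩ Y i)))
          = fun M => lB (seq Q) - lB (seq (Q ∩ TailY M)) := by
        funext M
        linarith [hlB_eq M]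
      rw [heq]
      simpa using tendsto_const_nhds.sub hremto
    have hfn : (fun i => lB (seq (S ∩ Y i ∩ T ⁻¹' (Y j)))) = fun i => lB (seq (Q ∩ Y i)) :=
      funext fun i => by rw [hpiece i]
    rw [hfn]
    exact hasSum_of_tendsto_sum_range
      (fun i => hlB.nonneg _ (hBddQY i) (fun n => mseq_nonneg _ _ _)) hpartial
  -- claim gamma (rows)
  have claimγ : ∀ i : ℕ, HasSum (fun j => lB (seq (S ∩ Y i ∩ T ⁻¹' (Y j))))
      (lB (seq (S ∩ Y i))) := by
    intro i
    set P : Set X := S ∩ Y i with hPdef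
    have hPmeas : MeasurableSet P := hSmeas.inter (hYmeas i)
    have hPsub : P ⊆ Xs i := fun x hx => hYsub i hx.2
    have hnull : ∀ n, mseq m T Xs (P \ T ⁻¹' (⋃ k, Y k)) n = 0 := by
      have h0 : m (univ \ ⋃ k, Y k) = 0 := by
        rw [hYunion]
        exact hMM.cover
      have hmeasU : MeasurableSet (univ \ ⋃ k, Y k) :=
        MeasurableSet.univ.diff (MeasurableSet.iUnion fun k => hYmeas k)
      have h1 : m (T ⁻¹' (univ \ ⋃ k, Y k)) = 0 := by
        rw [← Measure.map_apply hTmeas hmeasU]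
        exact hMM.quasi_invariant h0
      have hsub : P \ T ⁻¹' (⋃ k, Y k) ⊆ T ⁻¹' (univ \ ⋃ k, Y k) := by
        rintro x ⟨-, hx2⟩
        exact ⟨trivial, hx2⟩
      have h2 : m (P \ T ⁻¹' (⋃ k, Y k)) = 0 := measure_mono_null hsub h1
      exact fun n => mseq_null Xs hTmeas hMM.quasi_invariant
        (hPmeas.diff (hTmeas (MeasurableSet.iUnion fun k => hYmeas k))) h2 n
    have hfun : ∀ M n, mseq m T Xs P n
        = (∑ j ∈ Finset.range M, mseq m T Xs (P ∩ T ⁻¹' (Y j)) n)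
          + mseq m T Xs (P ∩ T ⁻¹' TailY M) n := by
      intro M n
      have hdecomp : P = (⋃ j ∈ Finset.range M, (P ∩ T ⁻¹' (Y j)))
          ∪ ((P ∩ T ⁻¹' TailY M) ∪ (P \ T ⁻¹' (⋃ k, Y k))) := by
        ext x
        constructor
        · intro hx
          by_cases hxU : T x ∈ ⋃ k, Y k
          · obtain ⟨jj, hjj⟩ := mem_iUnion.1 hxU
            by_cases hjM : jj < M
            · exact Or.inl (mem_biUnion (Finset.mem_range.2 hjM) ⟨hx, hjj⟩)
            · refine Or.inr (Or.inl ⟨hx, ?_⟩)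
              exact mem_biUnion (mem_Ici.2 (le_of_not_gt hjM)) hjj
          · exact Or.inr (Or.inr ⟨hx, hxU⟩)
        · rintro (hx | hx | hx)
          · obtain ⟨jj, _, hxPY⟩ := mem_iUnion₂.1 hx
            exact hxPY.1
          · exact hx.1
          · exact hx.1
      have hd2 : Disjoint (P ∩ T ⁻¹' TailY M) (P \ T ⁻¹' (⋃ k, Y k)) := by
        rw [Set.disjoint_left]
        rintro x ⟨-, hxT⟩ ⟨-, hxU⟩
        obtain ⟨k, -, hk⟩ := mem_iUnion₂.1 hxT
        exact hxU (mem_iUnion.2 ⟨k, hk⟩)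
      have hd1 : Disjoint (⋃ j ∈ Finset.range M, (P ∩ T ⁻¹' (Y j)))
          ((P ∩ T ⁻¹' TailY M) ∪ (P \ T ⁻¹' (⋃ k, Y k))) := by
        rw [Set.disjoint_left]
        intro x hxL hxR
        obtain ⟨jj, hjM, -, hxYj⟩ := mem_iUnion₂.1 hxL
        rcases hxR with ⟨-, hxT⟩ | ⟨-, hxU⟩
        · obtain ⟨k, hkM, hxYk⟩ := mem_iUnion₂.1 hxT
          have hjk : jj ≠ k := by
            have h1 := Finset.mem_range.1 hjM
            have h2 := mem_Ici.1 hkM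
            omega
          exact (Set.disjoint_left.1 (hYdisj jj k hjk) hxYj) hxYk
        · exact hxU (mem_iUnion.2 ⟨jj, hxYj⟩)
      have hdpw : (↑(Finset.range M) : Set ℕ).PairwiseDisjoint
          (fun j => P ∩ T ⁻¹' (Y j)) := by
        intro a _ b _ hab
        exact (((hYdisj a b hab).preimage T).inter_left' P).inter_right' P
      have hmR : MeasurableSet ((P ∩ T ⁻¹' TailY M) ∪ (P \ T ⁻¹' (⋃ k, Y k))) :=
        (hPmeas.inter (hTmeas (hTailmeas M))).union
          (hPmeas.diff (hTmeas (MeasurableSet.iUnion fun k => hYmeas k)))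
      have e1 : mseq m T Xs P n
          = mseq m T Xs (⋃ j ∈ Finset.range M, (P ∩ T ⁻¹' (Y j))) n
            + mseq m T Xs ((P ∩ T ⁻¹' TailY M) ∪ (P \ T ⁻¹' (⋃ k, Y k))) n := by
        nth_rewrite 1 [hdecomp]
        exact mseq_union Xs hTmeas hmR hd1 n
      have e2 : mseq m T Xs ((P ∩ T ⁻¹' TailY M) ∪ (P \ T ⁻¹' (⋃ k, Y k))) n
          = mseq m T Xs (P ∩ T ⁻¹' TailY M) n := by
        rw [mseq_union Xs hTmeas
          (hPmeas.diff (hTmeas (MeasurableSet.iUnion fun k => hYmeas k))) hd2 n,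
          hnull n, add_zero]
      have e3 : mseq m T Xs (⋃ j ∈ Finset.range M, (P ∩ T ⁻¹' (Y j))) n
          = ∑ j ∈ Finset.range M, mseq m T Xs (P ∩ T ⁻¹' (Y j)) n :=
        mseq_biUnion Xs hTmeas (Finset.range M) _
          (fun j _ => hPmeas.inter (hTmeas (hYmeas j))) hdpw n
      rw [e1, e2, e3]
    have hBddPY : ∀ j, Bdd (seq (P ∩ T ⁻¹' (Y j))) := fun j =>
      hBdd i _ (hPmeas.inter (hTmeas (hYmeas j)))
        (fun x hx => hYsub i hx.1.2)
    have hBddPT : ∀ M, Bdd (seq (P ∩ T ⁻¹' TailY M)) := fun M =>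
      hBdd i _ (hPmeas.inter (hTmeas (hTailmeas M))) (fun x hx => hYsub i hx.1.2)
    have hlB_eq : ∀ M, lB (seq P)
        = (∑ j ∈ Finset.range M, lB (seq (P ∩ T ⁻¹' (Y j))))
          + lB (seq (P ∩ T ⁻¹' TailY M)) := by
      intro M
      have hfeq : seq P = (∑ j ∈ Finset.range M, seq (P ∩ T ⁻¹' (Y j)))
          + seq (P ∩ T ⁻¹' TailY M) := by
        funext n
        have := hfun M (n + 1)
        simpa [hseqdef, Finset.sum_apply] using this
      rw [hfeq, hlB.map_add _ _ (Bdd.finsetSum _ _ (fun j _ => hBddPY j)) (hBddPT M),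
        lB_finset_sum hlB _ _ (fun j _ => hBddPY j)]
    have hremnn : ∀ M, 0 ≤ lB (seq (P ∩ T ⁻¹' TailY M)) := fun M =>
      hlB.nonneg _ (hBddPT M) (fun n => mseq_nonneg _ _ _)
    have hrem : ∀ M, lB (seq (P ∩ T ⁻¹' TailY M))
        ≤ Cb i * (m (Y i ∩ T ⁻¹' TailY M)).toReal := by
      intro M
      have hb : ∀ n, seq (P ∩ T ⁻¹' TailY M) n
          ≤ Cb i * (m (Y i ∩ T ⁻¹' TailY M)).toReal := by
        intro n
        calc seq (P ∩ T ⁻¹' TailY M) n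
            ≤ Cb i * (m (P ∩ T ⁻¹' TailY M)).toReal :=
              (hCb i _ (hPmeas.inter (hTmeas (hTailmeas M)))
                (fun x hx => hYsub i hx.1.2)).1 (n + 1)
          _ ≤ Cb i * (m (Y i ∩ T ⁻¹' TailY M)).toReal := by
              have h1 : (m (P ∩ T ⁻¹' TailY M)).toReal
                  ≤ (m (Y i ∩ T ⁻¹' TailY M)).toReal :=
                ENNReal.toReal_mono (measure_ne_top m _)
                  (measure_mono (fun x hx => ⟨hx.1.2, hx.2⟩))
              nlinarith [hCb0 i]
      have := lB_mono hlB (hBddPT M) (bdd_const _) hb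
      rwa [lB_const hlB] at this
    have hρ : Tendsto (fun M => Cb i * (m (Y i ∩ T ⁻¹' TailY M)).toReal)
        atTop (nhds 0) := by
      have hanti : Antitone (fun M => Y i ∩ T ⁻¹' TailY M) := by
        intro a b hab
        apply inter_subset_inter_right
        apply preimage_mono
        exact biUnion_subset_biUnion_left (Ici_subset_Ici.2 hab)
      have hiInter : (⋂ M, (Y i ∩ T ⁻¹' TailY M)) = ∅ := by
        ext x
        simp only [mem_iInter, mem_empty_iff_false, iff_false]
        intro hall
        obtain ⟨j0, -, hYj0⟩ := mem_iUnion₂.1 (hall 0).2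
        obtain ⟨j1, hj1, hYj1⟩ := mem_iUnion₂.1 (hall (j0 + 1)).2
        have hne : j0 ≠ j1 := by
          have := mem_Ici.1 hj1
          omega
        exact (Set.disjoint_left.1 (hYdisj j0 j1 hne) hYj0) hYj1
      have hlim := tendsto_measure_iInter_atTop (μ := m)
        (fun M => ((hYmeas i).inter (hTmeas (hTailmeas M))).nullMeasurableSet)
        hanti ⟨0, measure_ne_top m _⟩
      rw [hiInter] at hlim
      simp only [measure_empty] at hlim
      have h7 : Tendsto (fun M => (m (Y i ∩ T ⁻¹' TailY M)).toReal) atTop (nhds 0) := by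
        have := (ENNReal.tendsto_toReal (by simp : (0 : ENNReal) ≠ ⊤)).comp hlim
        simpa [Function.comp_def] using this
      simpa using h7.const_mul (Cb i)
    have hremto : Tendsto (fun M => lB (seq (P ∩ T ⁻¹' TailY M))) atTop (nhds 0) :=
      squeeze_zero hremnn hrem hρ
    have hpartial : Tendsto (fun M => ∑ j ∈ Finset.range M, lB (seq (P ∩ T ⁻¹' (Y j))))
        atTop (nhds (lB (seq P))) := by
      have heq : (fun M => ∑ j ∈ Finset.range M, lB (seq (P ∩ T ⁻¹' (Y j))))
          = fun M => lB (seq P) - lB (seq (P ∩ T ⁻¹' TailY M)) := by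
        funext M
        linarith [hlB_eq M]
      rw [heq]
      simpa using tendsto_const_nhds.sub hremto
    have hfn : (fun j => lB (seq (S ∩ Y i ∩ T ⁻¹' (Y j))))
        = fun j => lB (seq (P ∩ T ⁻¹' (Y j))) := rfl
    rw [hfn]
    exact hasSum_of_tendsto_sum_range
      (fun j => hlB.nonneg _ (hBddPY j) (fun n => mseq_nonneg _ _ _)) hpartial
  have hanonneg : ∀ i j, 0 ≤ lB (seq (S ∩ Y i ∩ T ⁻¹' (Y j))) := by
    intro i j
    refine hlB.nonneg _ ?_ (fun n => mseq_nonneg _ _ _)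
    exact hBdd i _ ((hSmeas.inter (hYmeas i)).inter (hTmeas (hYmeas j)))
      (fun x hx => hYsub i hx.1.2)
  have hcol : ∀ j, HasSum (fun i => lB (seq (S ∩ Y i ∩ T ⁻¹' (Y j))))
      (lB (seq (A ∩ Y j))) := fun j => (claimα j) ▸ claimβ j
  have final := tsum_eq_of_hasSum_rows_cols hanonneg claimγ hcol
  exact final

/-- For a Marco–Martens map and a Banach limit `lB`, the set function
`μ(A) := Σ_{j=0}^∞ lB((m_n(A ∩ Y_j))_{n ≥ 1})` is `T`-invariant: `μ(T⁻¹(A)) = μ(A)` for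
every measurable `A ⊆ X`. -/
theorem stmt13 {X : Type*} [MeasurableSpace X] (m : Measure X) [IsProbabilityMeasure m]
    (T : X → X) (Xs : ℕ → Set X) (K : ℕ → ℝ) (hMM : MarcoMartens m T Xs K)
    (lB : (ℕ → ℝ) → ℝ) (hlB : IsBanachLimit lB) :
    ∀ A : Set X, MeasurableSet A →
      MMmu m T Xs lB (T ⁻¹' A) = MMmu m T Xs lB A :=
  stmt13' m T Xs K hMM lB hlB
end

section
/- Let T be a Marco–Martens map on the probability space (X, ℬ, m) with Marco–Martens cover {X_j}_{j≥0}. Then there exists a σ-finite T-invariant measure μ on (X, ℬ) that is equivalent to m (i.e. μ and m are mutually absolutely continuous) and satisfies 0 < μ(X_j) < +∞ for every j ≥ 0. -/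
set_option linter.unusedSectionVars false
set_option linter.unusedVariables false
set_option maxHeartbeats 1000000


open MeasureTheory Set Filter
open scoped ENNReal

namespace MMaux

variable {X : Type*} [MeasurableSpace X]

/-- numerator sequence -/
noncomputable def num (m : Measure X) (T : X → X) (A : Set X) (n : ℕ) : ℝ≥0∞ :=
  ∑ k ∈ Finset.range (n + 1), m (T^[k] ⁻¹' A)

/-- ratio sequence -/
noncomputable def nu (m : Measure X) (T : X → X) (Xs : ℕ → Set X) (A : Set X) (n : ℕ) : ℝ≥0∞ :=
  num m T A n / num m T (Xs 0) n

/-- ultrafilter limit -/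
noncomputable def eta (U : Ultrafilter ℕ) (m : Measure X) (T : X → X) (Xs : ℕ → Set X)
    (A : Set X) : ℝ≥0∞ := (U.map (nu m T Xs A)).lim

variable (U : Ultrafilter ℕ) (m : Measure X) (T : X → X) (Xs : ℕ → Set X)

lemma tendsto_eta (A : Set X) : Tendsto (nu m T Xs A) U (nhds (eta U m T Xs A)) :=
  (U.map (nu m T Xs A)).le_nhds_lim

lemma num_mono_set {A B : Set X} (h : A ⊆ B) (n : ℕ) : num m T A n ≤ num m T B n :=
  Finset.sum_le_sum fun k _ => measure_mono (preimage_mono h)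

lemma num_mono_n (A : Set X) : Monotone (num m T A) := fun a b hab =>
  Finset.sum_le_sum_of_subset (by simpa using Nat.succ_le_succ hab)

variable [IsProbabilityMeasure m]

lemma num_ne_top (A : Set X) (n : ℕ) : num m T A n ≠ ⊤ := by
  refine ne_top_of_le_ne_top (b := (n+1 : ℝ≥0∞)) (by simp) ?_
  calc num m T A n ≤ ∑ k ∈ Finset.range (n+1), 1 :=
        Finset.sum_le_sum fun k _ => prob_le_one
    _ = (n+1 : ℝ≥0∞) := by simp

lemma num_add_le (A : Set X) (n r : ℕ) : num m T A (n + r) ≤ num m T A n + r := by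
  induction r with
  | zero => simp
  | succ r ih =>
      have : num m T A (n + (r+1)) = num m T A (n+r) + m (T^[n+r+1] ⁻¹' A) := by
        simp [num, ← Nat.add_assoc, Finset.sum_range_succ]
      rw [this]
      push_cast
      calc num m T A (n+r) + m (T^[n+r+1] ⁻¹' A) ≤ (num m T A n + r) + 1 :=
            add_le_add ih prob_le_one
        _ = num m T A n + (r + 1) := by ring

lemma sum_shift_le (A : Set X) (n r : ℕ) :
    ∑ k ∈ Finset.range (n+1), m (T^[r + k] ⁻¹' A) ≤ num m T A (n + r) := by
  have h1 : ∑ k ∈ Finset.range (n+1), m (T^[r + k] ⁻¹' A)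
      = ∑ k ∈ Finset.Ico r (n+1+r), m (T^[k] ⁻¹' A) := by
    rw [Finset.sum_Ico_eq_sum_range]
    simp
  rw [h1]
  refine le_trans (Finset.sum_le_sum_of_subset ?_) (num_mono_n m T A (by omega : n + r ≤ n+r))
  intro x hx
  simp only [Finset.mem_Ico, Finset.mem_range] at *
  omega

lemma num_zero_eq (A : Set X) : num m T A 0 = m A := by simp [num]

lemma num_pos_of_pos {A : Set X} (hA : 0 < m A) (n : ℕ) : 0 < num m T A n :=
  lt_of_lt_of_le (by rwa [num_zero_eq]) (num_mono_n m T A (Nat.zero_le n))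

lemma D_tendsto_top (h5 : ∑' n : ℕ, m (T^[n] ⁻¹' Xs 0) = ⊤) :
    Tendsto (num m T (Xs 0)) atTop (nhds ⊤) := by
  have := ENNReal.tendsto_nat_tsum (fun n => m (T^[n] ⁻¹' Xs 0))
  rw [h5] at this
  exact this.comp (tendsto_add_atTop_nat 1)

/-- division by D tends to 0 -/
lemma div_D_tendsto (h5 : ∑' n : ℕ, m (T^[n] ⁻¹' Xs 0) = ⊤) {c : ℝ≥0∞} (hc : c ≠ ⊤) :
    Tendsto (fun n => c / num m T (Xs 0) n) atTop (nhds 0) := by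
  have hD := D_tendsto_top m T Xs h5
  rw [ENNReal.tendsto_nhds_zero]
  intro ε hε
  rcases eq_or_ne ε ⊤ with rfl | hεt
  · exact Eventually.of_forall fun n => le_top
  have hcd : c / ε < ⊤ := by
    rcases eq_or_ne ε 0 with rfl | hε0
    · exact absurd hε (lt_irrefl 0)
    · exact ENNReal.div_lt_top hc hε0
  filter_upwards [hD.eventually (eventually_gt_nhds hcd)] with n hn
  rw [ENNReal.div_le_iff_le_mul (Or.inr hεt) (Or.inr (ne_of_gt hε))]
  · by_cases h0 : ε = 0
    · exact absurd hε (by simp [h0])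
    calc c = (c / ε) * ε := by rw [ENNReal.div_mul_cancel h0 hεt]
      _ ≤ num m T (Xs 0) n * ε := mul_le_mul_left hn.le _
      _ = ε * num m T (Xs 0) n := mul_comm _ _

section eta
variable {U m T Xs}

lemma eta_le_eta_add_of_eventually {A B : Set X} {c : ℕ → ℝ≥0∞}
    (hc : Tendsto c U (nhds 0))
    (h : ∀ᶠ n in (U : Filter ℕ), nu m T Xs A n ≤ nu m T Xs B n + c n) :
    eta U m T Xs A ≤ eta U m T Xs B := by
  have h2 : Tendsto (fun n => nu m T Xs B n + c n) U (nhds (eta U m T Xs B + 0)) :=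
    Tendsto.add (tendsto_eta U m T Xs B) hc
  rw [add_zero] at h2
  exact le_of_tendsto_of_tendsto (tendsto_eta U m T Xs A) h2 h

lemma eta_mono {A B : Set X} (h : A ⊆ B) : eta U m T Xs A ≤ eta U m T Xs B :=
  le_of_tendsto_of_tendsto (tendsto_eta U m T Xs A) (tendsto_eta U m T Xs B)
    (Eventually.of_forall fun n =>
      ENNReal.div_le_div_right (num_mono_set m T h n) _)

lemma eta_empty : eta U m T Xs (∅ : Set X) = 0 := by
  have : nu m T Xs (∅ : Set X) = fun _ => 0 := by
    funext n; simp [nu, num, ENNReal.zero_div]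
  exact tendsto_nhds_unique (tendsto_eta U m T Xs ∅) (by rw [this]; exact tendsto_const_nhds)

lemma eta_union {A B : Set X} (hB : MeasurableSet B) (hT : Measurable T)
    (hd : Disjoint A B) :
    eta U m T Xs (A ∪ B) = eta U m T Xs A + eta U m T Xs B := by
  have hnu : ∀ n, nu m T Xs (A ∪ B) n = nu m T Xs A n + nu m T Xs B n := by
    intro n
    have hnum : num m T (A ∪ B) n = num m T A n + num m T B n := by
      rw [num, num, num, ← Finset.sum_add_distrib]
      refine Finset.sum_congr rfl fun k _ => ?_
      rw [preimage_union]
      exact measure_union (hd.preimage _) ((hT.iterate k) hB)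
    rw [nu, nu, nu, hnum, ENNReal.add_div]
  refine tendsto_nhds_unique (tendsto_eta U m T Xs (A ∪ B)) ?_
  have := Tendsto.add (tendsto_eta U m T Xs A) (tendsto_eta U m T Xs B)
  refine Tendsto.congr (fun n => (hnu n).symm) this

lemma eta_le_const {A : Set X} {c : ℝ≥0∞} (h : ∀ n, nu m T Xs A n ≤ c) :
    eta U m T Xs A ≤ c :=
  le_of_tendsto (tendsto_eta U m T Xs A) (Eventually.of_forall h)

lemma const_le_eta {A : Set X} {c : ℝ≥0∞} (hU : (U : Filter ℕ) ≤ atTop)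
    (h : ∀ᶠ n in atTop, c ≤ nu m T Xs A n) :
    c ≤ eta U m T Xs A :=
  ge_of_tendsto (tendsto_eta U m T Xs A) (h.filter_mono hU)

end eta

section withMM
variable {U m T Xs} {K : ℕ → ℝ} (hU : (U : Filter ℕ) ≤ atTop) (hMM : MarcoMartens m T Xs K)
include hMM

lemma prem_null {A : Set X} (hA : MeasurableSet A) (h : m A = 0) (k : ℕ) :
    m (T^[k] ⁻¹' A) = 0 := by
  induction k with
  | zero => simpa
  | succ k ih =>
      have hmeas : MeasurableSet (T^[k] ⁻¹' A) := (hMM.measurable_T.iterate k) hA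
      have : T^[k+1] ⁻¹' A = T ⁻¹' (T^[k] ⁻¹' A) := by
        rw [Function.iterate_succ, preimage_comp]
      rw [this, ← Measure.map_apply hMM.measurable_T hmeas]
      exact hMM.quasi_invariant ih

lemma eta_null {A : Set X} (hA : MeasurableSet A) (h : m A = 0) :
    eta U m T Xs A = 0 := by
  have : nu m T Xs A = fun _ => 0 := by
    funext n
    have : num m T A n = 0 :=
      Finset.sum_eq_zero fun k _ => prem_null hMM hA h k
    simp [nu, this, ENNReal.zero_div]
  exact tendsto_nhds_unique (tendsto_eta U m T Xs A) (by rw [this]; exact tendsto_const_nhds)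

omit hMM

lemma num_preimage_eq (A : Set X) (n : ℕ) :
    num m T (T ⁻¹' A) n = ∑ k ∈ Finset.range (n+1), m (T^[k+1] ⁻¹' A) := by
  refine Finset.sum_congr rfl fun k _ => ?_
  rw [Function.iterate_succ', Function.comp_def]
  rfl

lemma num_succ_eq (A : Set X) (n : ℕ) :
    num m T A (n+1) = (∑ k ∈ Finset.range (n+1), m (T^[k+1] ⁻¹' A)) + m A := by
  rw [num, Finset.sum_range_succ' (fun k => m (T^[k] ⁻¹' A)) (n+1)]
  simp

lemma nu_preimage_le (A : Set X) (n : ℕ) :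
    nu m T Xs (T ⁻¹' A) n ≤ nu m T Xs A n + 1 / num m T (Xs 0) n := by
  have h1 : num m T (T ⁻¹' A) n ≤ num m T A n + 1 := by
    rw [num_preimage_eq]
    calc (∑ k ∈ Finset.range (n+1), m (T^[k+1] ⁻¹' A))
        ≤ (∑ k ∈ Finset.range (n+1), m (T^[k+1] ⁻¹' A)) + m A := le_self_add
      _ = num m T A (n+1) := (num_succ_eq A n).symm
      _ ≤ num m T A n + 1 := by simpa using num_add_le m T A n 1
  calc nu m T Xs (T ⁻¹' A) n ≤ (num m T A n + 1) / num m T (Xs 0) n :=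
        ENNReal.div_le_div_right h1 _
    _ = nu m T Xs A n + 1 / num m T (Xs 0) n := ENNReal.add_div

lemma nu_le_preimage (A : Set X) (n : ℕ) :
    nu m T Xs A n ≤ nu m T Xs (T ⁻¹' A) n + 1 / num m T (Xs 0) n := by
  have h1 : num m T A n ≤ num m T (T ⁻¹' A) n + 1 := by
    calc num m T A n ≤ num m T A (n+1) := num_mono_n m T A (Nat.le_succ n)
      _ = (∑ k ∈ Finset.range (n+1), m (T^[k+1] ⁻¹' A)) + m A := num_succ_eq A n
      _ ≤ num m T (T ⁻¹' A) n + 1 := by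
          rw [← num_preimage_eq]
          exact add_le_add le_rfl prob_le_one
  calc nu m T Xs A n ≤ (num m T (T ⁻¹' A) n + 1) / num m T (Xs 0) n :=
        ENNReal.div_le_div_right h1 _
    _ = _ := ENNReal.add_div

include hMM hU

lemma eta_preimage (A : Set X) :
    eta U m T Xs (T ⁻¹' A) = eta U m T Xs A := by
  have hc : Tendsto (fun n => 1 / num m T (Xs 0) n) U (nhds 0) :=
    (div_D_tendsto m T Xs hMM.cond5 ENNReal.one_ne_top).mono_left hU
  refine le_antisymm ?_ ?_
  · exact eta_le_eta_add_of_eventually hc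
      (Eventually.of_forall fun n => nu_preimage_le A n)
  · exact eta_le_eta_add_of_eventually hc
      (Eventually.of_forall fun n => nu_le_preimage A n)


omit hU

lemma mXs_pos (j : ℕ) : 0 < m (Xs j) := by
  obtain ⟨k, hk⟩ := hMM.cond3 j 0
  exact lt_of_lt_of_le hk (measure_mono inter_subset_left)

lemma D_ne_zero (n : ℕ) : num m T (Xs 0) n ≠ 0 :=
  (num_pos_of_pos m T (mXs_pos hMM 0) n).ne'

lemma key_upper (j : ℕ) :
    ∃ C : ℝ≥0∞, C ≠ ⊤ ∧ ∀ A : Set X, MeasurableSet A → A ⊆ Xs j →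
      (∀ n, nu m T Xs A n ≤ C * m A) ∧ eta U m T Xs A ≤ C * m A := by
  obtain ⟨r, hr⟩ := hMM.cond3 j 0
  set F := Xs j ∩ T^[r] ⁻¹' Xs 0 with hF
  have hFmeas : MeasurableSet F := (hMM.meas_Xs j).inter ((hMM.measurable_T.iterate r) (hMM.meas_Xs 0))
  have ha0 : m F ≠ 0 := hr.ne'
  have haT : m F ≠ ⊤ := measure_ne_top m F
  have hX0 : m (Xs 0) ≠ 0 := (mXs_pos hMM 0).ne'
  have hX0T : m (Xs 0) ≠ ⊤ := measure_ne_top m _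
  set Kj := ENNReal.ofReal (K j) with hKj
  have hKt : Kj ≠ ⊤ := ENNReal.ofReal_ne_top
  set C : ℝ≥0∞ := (Kj / m F) * (1 + r / m (Xs 0)) with hC
  have hCT : C ≠ ⊤ := by
    apply ENNReal.mul_ne_top
    · exact (ENNReal.div_lt_top hKt ha0).ne
    · exact (ENNReal.add_lt_top.2 ⟨ENNReal.one_lt_top, ENNReal.div_lt_top (by simp) hX0⟩).ne
  refine ⟨C, hCT, fun A hAm hAsub => ?_⟩
  have hnu : ∀ n, nu m T Xs A n ≤ C * m A := by
    intro n
    have hDn0 : num m T (Xs 0) n ≠ 0 := D_ne_zero hMM n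
    have hDnT : num m T (Xs 0) n ≠ ⊤ := num_ne_top m T _ n
    rw [nu, ENNReal.div_le_iff hDn0 hDnT]
    -- main estimate
    have hmain : num m T A n * m F ≤ Kj * m A * (num m T (Xs 0) n + r) := by
      have h1 : num m T A n * m F ≤ Kj * (m A * ∑ k ∈ Finset.range (n+1), m (T^[k] ⁻¹' F)) := by
        rw [num, Finset.sum_mul, Finset.mul_sum, Finset.mul_sum]
        refine Finset.sum_le_sum fun k _ => ?_
        exact hMM.cond4 j A F hAm hFmeas hAsub inter_subset_left k
      have h2 : ∑ k ∈ Finset.range (n+1), m (T^[k] ⁻¹' F)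
          ≤ num m T (Xs 0) n + r := by
        have h3 : ∀ k, m (T^[k] ⁻¹' F) ≤ m (T^[r + k] ⁻¹' Xs 0) := by
          intro k
          have : T^[k] ⁻¹' (T^[r] ⁻¹' Xs 0) = T^[r + k] ⁻¹' Xs 0 := by
            rw [Function.iterate_add, preimage_comp]
          rw [← this]
          exact measure_mono (preimage_mono inter_subset_right)
        calc ∑ k ∈ Finset.range (n+1), m (T^[k] ⁻¹' F)
            ≤ ∑ k ∈ Finset.range (n+1), m (T^[r + k] ⁻¹' Xs 0) :=
              Finset.sum_le_sum fun k _ => h3 k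
          _ ≤ num m T (Xs 0) (n + r) := sum_shift_le m T (Xs 0) n r
          _ ≤ num m T (Xs 0) n + r := num_add_le m T (Xs 0) n r
      calc num m T A n * m F ≤ Kj * (m A * ∑ k ∈ Finset.range (n+1), m (T^[k] ⁻¹' F)) := h1
        _ ≤ Kj * (m A * (num m T (Xs 0) n + r)) := by
            exact mul_le_mul_right (mul_le_mul_right h2 _) _
        _ = Kj * m A * (num m T (Xs 0) n + r) := by rw [mul_assoc]
    have hDr : num m T (Xs 0) n + r ≤ (1 + (r : ℝ≥0∞) / m (Xs 0)) * num m T (Xs 0) n := by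
      rw [add_mul, one_mul]
      refine add_le_add le_rfl ?_
      calc (r : ℝ≥0∞) = (r : ℝ≥0∞) / m (Xs 0) * m (Xs 0) := by
            rw [ENNReal.div_mul_cancel hX0 hX0T]
        _ ≤ (r : ℝ≥0∞) / m (Xs 0) * num m T (Xs 0) n := by
            refine mul_le_mul_right ?_ _
            calc m (Xs 0) = num m T (Xs 0) 0 := (num_zero_eq m T _).symm
              _ ≤ num m T (Xs 0) n := num_mono_n m T _ (Nat.zero_le n)
    have hmain2 : num m T A n * m F ≤ Kj * m A * ((1 + (r : ℝ≥0∞) / m (Xs 0)) * num m T (Xs 0) n) :=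
      le_trans hmain (mul_le_mul_right hDr _)
    have := (ENNReal.le_div_iff_mul_le (Or.inl ha0) (Or.inl haT)).2 hmain2
    refine le_trans this (le_of_eq ?_)
    rw [hC]
    simp only [div_eq_mul_inv]
    ring
  exact ⟨hnu, eta_le_const (hnu)⟩


include hU

lemma key_lower (j : ℕ) :
    ∃ c : ℝ≥0∞, c ≠ 0 ∧ ∀ A : Set X, MeasurableSet A → A ⊆ Xs j →
      c * m A ≤ eta U m T Xs A := by
  obtain ⟨r, hr⟩ := hMM.cond3 0 j
  set G := Xs 0 ∩ T^[r] ⁻¹' Xs j with hG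
  have hGmeas : MeasurableSet G :=
    (hMM.meas_Xs 0).inter ((hMM.measurable_T.iterate r) (hMM.meas_Xs j))
  have hb0 : m G ≠ 0 := hr.ne'
  set K0 := ENNReal.ofReal (K 0) with hK0
  set Kj := ENNReal.ofReal (K j) with hKj
  have hK0t : K0 ≠ ⊤ := ENNReal.ofReal_ne_top
  have hKjt : Kj ≠ ⊤ := ENNReal.ofReal_ne_top
  have hK00 : K0 ≠ 0 := by
    rw [hK0]; simp only [ne_eq, ENNReal.ofReal_eq_zero, not_le]
    exact lt_of_lt_of_le one_pos (hMM.one_le_K 0)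
  have hKj0 : Kj ≠ 0 := by
    rw [hKj]; simp only [ne_eq, ENNReal.ofReal_eq_zero, not_le]
    exact lt_of_lt_of_le one_pos (hMM.one_le_K j)
  have hKK0 : K0 * Kj ≠ 0 := mul_ne_zero hK00 hKj0
  have hKKt : K0 * Kj ≠ ⊤ := ENNReal.mul_ne_top hK0t hKjt
  set c : ℝ≥0∞ := m G / (2 * (K0 * Kj)) with hc
  have hc0 : c ≠ 0 := by
    rw [hc]
    exact (ENNReal.div_pos hb0 (ENNReal.mul_ne_top (by simp) hKKt)).ne'
  refine ⟨c, hc0, fun A hAm hAsub => ?_⟩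
  -- main per-n estimate
  have hmain : ∀ n : ℕ, m G * m A * num m T (Xs 0) n ≤ (K0 * Kj) * num m T A (n + r) := by
    intro n
    have h1 : ∀ k, m (T^[k] ⁻¹' Xs 0) * m G * m A ≤ (K0 * Kj) * m (T^[r + k] ⁻¹' A) := by
      intro k
      have s1 : m (T^[k] ⁻¹' Xs 0) * m G ≤ K0 * m (T^[k] ⁻¹' G) := by
        calc m (T^[k] ⁻¹' Xs 0) * m G
            ≤ K0 * (m (Xs 0) * m (T^[k] ⁻¹' G)) :=
              hMM.cond4 0 (Xs 0) G (hMM.meas_Xs 0) hGmeas (subset_refl _) inter_subset_left k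
          _ ≤ K0 * (1 * m (T^[k] ⁻¹' G)) := by
              exact mul_le_mul_right (mul_le_mul_left prob_le_one _) _
          _ = K0 * m (T^[k] ⁻¹' G) := by rw [one_mul]
      have s2 : m (T^[k] ⁻¹' G) ≤ m (T^[r + k] ⁻¹' Xs j) := by
        have : T^[k] ⁻¹' (T^[r] ⁻¹' Xs j) = T^[r + k] ⁻¹' Xs j := by
          rw [Function.iterate_add, preimage_comp]
        rw [← this]
        exact measure_mono (preimage_mono inter_subset_right)
      have s3 : m (T^[r + k] ⁻¹' Xs j) * m A ≤ Kj * m (T^[r + k] ⁻¹' A) := by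
        calc m (T^[r + k] ⁻¹' Xs j) * m A
            ≤ Kj * (m (Xs j) * m (T^[r + k] ⁻¹' A)) :=
              hMM.cond4 j (Xs j) A (hMM.meas_Xs j) hAm (subset_refl _) hAsub (r + k)
          _ ≤ Kj * (1 * m (T^[r + k] ⁻¹' A)) :=
              mul_le_mul_right (mul_le_mul_left prob_le_one _) _
          _ = Kj * m (T^[r + k] ⁻¹' A) := by rw [one_mul]
      calc m (T^[k] ⁻¹' Xs 0) * m G * m A ≤ K0 * m (T^[k] ⁻¹' G) * m A :=
            mul_le_mul_left s1 _
        _ ≤ K0 * m (T^[r + k] ⁻¹' Xs j) * m A := mul_le_mul_left (mul_le_mul_right s2 _) _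
        _ = K0 * (m (T^[r + k] ⁻¹' Xs j) * m A) := by rw [mul_assoc]
        _ ≤ K0 * (Kj * m (T^[r + k] ⁻¹' A)) := mul_le_mul_right s3 _
        _ = (K0 * Kj) * m (T^[r + k] ⁻¹' A) := by rw [mul_assoc]
    calc m G * m A * num m T (Xs 0) n
        = ∑ k ∈ Finset.range (n+1), m (T^[k] ⁻¹' Xs 0) * m G * m A := by
          rw [num, Finset.mul_sum]
          refine Finset.sum_congr rfl fun k _ => by ring
      _ ≤ ∑ k ∈ Finset.range (n+1), (K0 * Kj) * m (T^[r + k] ⁻¹' A) :=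
          Finset.sum_le_sum fun k _ => h1 k
      _ = (K0 * Kj) * ∑ k ∈ Finset.range (n+1), m (T^[r + k] ⁻¹' A) := by
          rw [Finset.mul_sum]
      _ ≤ (K0 * Kj) * num m T A (n + r) :=
          mul_le_mul_right (sum_shift_le m T A n r) _
  -- eventual lower bound on nu
  have hev : ∀ᶠ n in atTop, c * m A ≤ nu m T Xs A n := by
    have hDtop := D_tendsto_top m T Xs hMM.cond5
    have h2r : ((2 * r : ℕ) : ℝ≥0∞) < ⊤ := ENNReal.natCast_lt_top _
    filter_upwards [eventually_ge_atTop r, hDtop.eventually (eventually_ge_nhds h2r)]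
      with n hn1 hn2
    set D := num m T (Xs 0) with hD
    have hDn0 : D n ≠ 0 := D_ne_zero hMM n
    have hDnT : D n ≠ ⊤ := num_ne_top m T _ n
    set q := n - r with hq
    have hqr : q + r = n := by omega
    have H1 : m G * m A * D q ≤ (K0 * Kj) * num m T A n := by
      have := hmain q
      rwa [hqr] at this
    have H2 : D n ≤ D q + r := by
      have := num_add_le m T (Xs 0) q r
      rwa [hqr] at this
    have H3 : (r : ℝ≥0∞) ≤ D n / 2 := by
      rw [ENNReal.le_div_iff_mul_le (Or.inl two_ne_zero) (Or.inl ENNReal.ofNat_ne_top)]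
      calc (r : ℝ≥0∞) * 2 = ((2 * r : ℕ) : ℝ≥0∞) := by push_cast; ring
        _ ≤ D n := hn2
    have H4 : D n / 2 ≤ D q := by
      have h5 : D n ≤ D q + D n / 2 := le_trans H2 (add_le_add le_rfl H3)
      have h6 : D n - D n / 2 ≤ D q := tsub_le_iff_right.2 h5
      rwa [ENNReal.sub_half hDnT] at h6
    rw [nu, ENNReal.le_div_iff_mul_le (Or.inl hDn0) (Or.inl hDnT)]
    have H5 : m G * m A * (D n / 2) ≤ (K0 * Kj) * num m T A n :=
      le_trans (mul_le_mul_right H4 _) H1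
    have H6 : m G * m A * (D n / 2) * (K0 * Kj)⁻¹ ≤ num m T A n := by
      calc m G * m A * (D n / 2) * (K0 * Kj)⁻¹
          ≤ (K0 * Kj) * num m T A n * (K0 * Kj)⁻¹ := mul_le_mul_left H5 _
        _ = num m T A n * ((K0 * Kj) * (K0 * Kj)⁻¹) := by ring
        _ = num m T A n := by rw [ENNReal.mul_inv_cancel hKK0 hKKt, mul_one]
    refine le_trans (le_of_eq ?_) H6
    rw [hc]
    rw [div_eq_mul_inv, div_eq_mul_inv,
      ENNReal.mul_inv (Or.inr hKKt) (Or.inr hKK0)]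
    ring
  exact const_le_eta hU hev

omit hU hMM

lemma MMY_subset (j : ℕ) : MMY Xs j ⊆ Xs j := diff_subset

lemma MMY_meas (hXs : ∀ j, MeasurableSet (Xs j)) (j : ℕ) : MeasurableSet (MMY Xs j) :=
  (hXs j).diff (MeasurableSet.biUnion (to_countable _) fun i _ => hXs i)

lemma MMY_disjoint : Pairwise (Function.onFun Disjoint (MMY Xs)) := by
  have key : ∀ i j : ℕ, i < j → Disjoint (MMY Xs i) (MMY Xs j) := by
    intro i j hij
    rw [disjoint_left]
    intro x hxi hxj
    exact hxj.2 (mem_biUnion hij hxi.1)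
  intro i j hij
  rcases lt_or_gt_of_ne hij with h | h
  · exact key i j h
  · exact (key j i h).symm

lemma iUnion_MMY : ⋃ j, MMY Xs j = ⋃ j, Xs j := by
  apply subset_antisymm
  · exact iUnion_mono fun j => MMY_subset j
  · intro x hx
    rw [mem_iUnion] at hx
    have hx' : ∃ n, x ∈ Xs n := hx
    classical
    let n₀ := Nat.find hx'
    refine mem_iUnion.2 ⟨n₀, Nat.find_spec hx', ?_⟩
    intro hmem
    rw [mem_iUnion₂] at hmem
    obtain ⟨i, hi, hxi⟩ := hmem
    exact absurd hxi (Nat.find_min hx' hi)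

lemma eta_union_le (A B : Set X) :
    eta U m T Xs (A ∪ B) ≤ eta U m T Xs A + eta U m T Xs B := by
  have h2 : Tendsto (fun n => nu m T Xs A n + nu m T Xs B n)
      U (nhds (eta U m T Xs A + eta U m T Xs B)) :=
    Tendsto.add (tendsto_eta U m T Xs A) (tendsto_eta U m T Xs B)
  refine le_of_tendsto_of_tendsto (tendsto_eta U m T Xs (A ∪ B)) h2
    (Eventually.of_forall fun n => ?_)
  have hnum : num m T (A ∪ B) n ≤ num m T A n + num m T B n := by
    rw [num, num, num, ← Finset.sum_add_distrib]
    refine Finset.sum_le_sum fun k _ => ?_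
    rw [preimage_union]
    exact measure_union_le _ _
  calc nu m T Xs (A ∪ B) n ≤ (num m T A n + num m T B n) / num m T (Xs 0) n :=
        ENNReal.div_le_div_right hnum _
    _ = _ := ENNReal.add_div

lemma eta_finset_sum (hT : Measurable T) (g : ℕ → Set X) (hmeas : ∀ i, MeasurableSet (g i))
    (hd : Pairwise (Function.onFun Disjoint g)) (s : Finset ℕ) :
    eta U m T Xs (⋃ i ∈ s, g i) = ∑ i ∈ s, eta U m T Xs (g i) := by
  classical
  induction s using Finset.induction_on with
  | empty => simpa using eta_empty
  | @insert a s ha ih =>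
      rw [Finset.set_biUnion_insert, Finset.sum_insert ha, ← ih, union_comm]
      rw [eta_union (hmeas a) hT ?hd]
      · ring
      case hd =>
        refine disjoint_iUnion₂_left.2 fun i hi => ?_
        exact hd (by rintro rfl; exact ha hi)

lemma eta_iUnion_within (hMM : MarcoMartens m T Xs K) (j : ℕ)
    (g : ℕ → Set X) (hmeas : ∀ i, MeasurableSet (g i)) (hd : Pairwise (Function.onFun Disjoint g))
    (hsub : ∀ i, g i ⊆ Xs j) :
    eta U m T Xs (⋃ i, g i) = ∑' i, eta U m T Xs (g i) := by
  obtain ⟨C, hCT, hC⟩ := key_upper (U := U) hMM j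
  have hT := hMM.measurable_T
  refine le_antisymm ?_ ?_
  · -- eta(⋃) ≤ Σ'
    have hsum : ∑' i, m (g i) ≠ ⊤ := by
      rw [measure_iUnion hd hmeas |>.symm]
      exact measure_ne_top m _
    have hle : ∀ N : ℕ, eta U m T Xs (⋃ i, g i)
        ≤ (∑ i ∈ Finset.range N, eta U m T Xs (g i)) + C * ∑' i, m (g (i + N)) := by
      intro N
      have hsplit : (⋃ i, g i) = (⋃ i ∈ Finset.range N, g i) ∪ ⋃ i, g (i + N) := by
        apply subset_antisymm
        · intro x hx
          rw [mem_iUnion] at hx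
          obtain ⟨i, hi⟩ := hx
          rcases lt_or_ge i N with h | h
          · exact Or.inl (mem_biUnion (Finset.mem_range.2 h) hi)
          · exact Or.inr (mem_iUnion.2 ⟨i - N, by rwa [Nat.sub_add_cancel h]⟩)
        · rintro x (hx | hx)
          · obtain ⟨i, _, hi⟩ := mem_iUnion₂.1 hx
            exact mem_iUnion.2 ⟨i, hi⟩
          · obtain ⟨i, hi⟩ := mem_iUnion.1 hx
            exact mem_iUnion.2 ⟨i + N, hi⟩
      rw [hsplit]
      refine le_trans (eta_union_le _ _) (add_le_add ?_ ?_)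
      · rw [eta_finset_sum hT g hmeas hd]
      · have htail_sub : (⋃ i, g (i + N)) ⊆ Xs j := iUnion_subset fun i => hsub _
        have htail_meas : MeasurableSet (⋃ i, g (i + N)) :=
          MeasurableSet.iUnion fun i => hmeas _
        refine le_trans ((hC _ htail_meas htail_sub).2) (mul_le_mul_right ?_ _)
        exact measure_iUnion_le _
    have htendsto : Tendsto (fun N => (∑ i ∈ Finset.range N, eta U m T Xs (g i))
        + C * ∑' i, m (g (i + N))) atTop (nhds ((∑' i, eta U m T Xs (g i)) + C * 0)) := by
      refine Tendsto.add (ENNReal.tendsto_nat_tsum _) ?_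
      exact ENNReal.Tendsto.const_mul (ENNReal.tendsto_sum_nat_add _ hsum) (Or.inr hCT)
    rw [mul_zero, add_zero] at htendsto
    exact ge_of_tendsto htendsto (Eventually.of_forall hle)
  · -- Σ' ≤ eta(⋃)
    rw [ENNReal.tsum_eq_iSup_sum]
    refine iSup_le fun s => ?_
    rw [← eta_finset_sum hT g hmeas hd s]
    exact eta_mono (iUnion₂_subset fun i _ => subset_iUnion g i)

include hU hMM in
lemma eta_preimage_tsum {j : ℕ} {S : Set X} (hS : MeasurableSet S) (hsub : S ⊆ Xs j) :
    eta U m T Xs (T ⁻¹' S) = ∑' i, eta U m T Xs (T ⁻¹' S ∩ MMY Xs i) := by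
  obtain ⟨C, hCT, hC⟩ := key_upper (U := U) hMM j
  have hT := hMM.measurable_T
  have hYmeas : ∀ i, MeasurableSet (MMY Xs i) := MMY_meas hMM.meas_Xs
  have hSpre : MeasurableSet (T ⁻¹' S) := hT hS
  have hpmeas : ∀ i, MeasurableSet (T ⁻¹' S ∩ MMY Xs i) := fun i => hSpre.inter (hYmeas i)
  have hpdisj : Pairwise (Function.onFun Disjoint fun i => T ⁻¹' S ∩ MMY Xs i) := fun i j hij =>
    ((MMY_disjoint (Xs := Xs) hij).inter_left' _).inter_right' _
  refine le_antisymm ?_ ?_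
  · -- ≤ : uses cond6
    set W := ⋃ i, MMY Xs i with hW
    have hWmeas : MeasurableSet W := MeasurableSet.iUnion hYmeas
    have hrest : eta U m T Xs (T ⁻¹' S \ W) = 0 := by
      refine eta_null hMM (hSpre.diff hWmeas) ?_
      have h0 : m (univ \ W) = 0 := by
        rw [hW, iUnion_MMY]
        exact hMM.cover
      exact measure_mono_null (diff_subset_diff (subset_univ _) le_rfl) h0
    have hle : ∀ l : ℕ, eta U m T Xs (T ⁻¹' S)
        ≤ (∑ i ∈ Finset.range l, eta U m T Xs (T ⁻¹' S ∩ MMY Xs i))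
          + C * m (T '' ⋃ i ∈ Set.Ici l, MMY Xs i) := by
      intro l
      set Bl := ⋃ i ∈ Set.Ici l, MMY Xs i with hBl
      have hBlmeas : MeasurableSet Bl :=
        MeasurableSet.biUnion (to_countable _) fun i _ => hYmeas i
      have hTBl : MeasurableSet (T '' Bl) := hMM.image_meas Bl hBlmeas
      have hsplit : T ⁻¹' S ⊆ (⋃ i ∈ Finset.range l, (T ⁻¹' S ∩ MMY Xs i))
          ∪ ((T ⁻¹' S ∩ Bl) ∪ (T ⁻¹' S \ W)) := by
        intro x hx
        by_cases hxW : x ∈ W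
        · obtain ⟨i, hi⟩ := mem_iUnion.1 hxW
          rcases lt_or_ge i l with h | h
          · exact Or.inl (mem_biUnion (Finset.mem_range.2 h) ⟨hx, hi⟩)
          · exact Or.inr (Or.inl ⟨hx, mem_biUnion h hi⟩)
        · exact Or.inr (Or.inr ⟨hx, hxW⟩)
      calc eta U m T Xs (T ⁻¹' S)
          ≤ eta U m T Xs ((⋃ i ∈ Finset.range l, (T ⁻¹' S ∩ MMY Xs i))
              ∪ ((T ⁻¹' S ∩ Bl) ∪ (T ⁻¹' S \ W))) := eta_mono hsplit
        _ ≤ eta U m T Xs (⋃ i ∈ Finset.range l, (T ⁻¹' S ∩ MMY Xs i))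
              + (eta U m T Xs (T ⁻¹' S ∩ Bl) + eta U m T Xs (T ⁻¹' S \ W)) :=
            le_trans (eta_union_le _ _) (add_le_add le_rfl (eta_union_le _ _))
        _ = (∑ i ∈ Finset.range l, eta U m T Xs (T ⁻¹' S ∩ MMY Xs i))
              + eta U m T Xs (T ⁻¹' S ∩ Bl) := by
            rw [hrest, add_zero, eta_finset_sum hT _ hpmeas hpdisj]
        _ ≤ _ := by
            refine add_le_add le_rfl ?_
            -- eta (T⁻¹S ∩ Bl) ≤ C * m (S ∩ T '' Bl) ≤ C * m (T '' Bl)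
            have hincl : ∀ k : ℕ, T^[k] ⁻¹' (T ⁻¹' S ∩ Bl) ⊆ T^[k+1] ⁻¹' (S ∩ T '' Bl) := by
              intro k x hx
              have h1 : T^[k] x ∈ T ⁻¹' S := hx.1
              have h2 : T^[k] x ∈ Bl := hx.2
              have : T^[k+1] x = T (T^[k] x) := Function.iterate_succ_apply' T k x
              refine mem_preimage.2 ?_
              rw [this]
              exact ⟨h1, mem_image_of_mem T h2⟩
            have hnum : ∀ n, num m T (T ⁻¹' S ∩ Bl) n ≤ num m T (S ∩ T '' Bl) n + 1 := by
              intro n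
              calc num m T (T ⁻¹' S ∩ Bl) n
                  ≤ ∑ k ∈ Finset.range (n+1), m (T^[k+1] ⁻¹' (S ∩ T '' Bl)) :=
                    Finset.sum_le_sum fun k _ => measure_mono (hincl k)
                _ ≤ num m T (S ∩ T '' Bl) (n+1) := by
                    rw [num_succ_eq]
                    exact le_self_add
                _ ≤ num m T (S ∩ T '' Bl) n + 1 := by
                    simpa using num_add_le m T (S ∩ T '' Bl) n 1
            have heta1 : eta U m T Xs (T ⁻¹' S ∩ Bl) ≤ eta U m T Xs (S ∩ T '' Bl) := by
              refine eta_le_eta_add_of_eventually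
                ((div_D_tendsto m T Xs hMM.cond5 ENNReal.one_ne_top).mono_left hU)
                (Eventually.of_forall fun n => ?_)
              calc nu m T Xs (T ⁻¹' S ∩ Bl) n
                  ≤ (num m T (S ∩ T '' Bl) n + 1) / num m T (Xs 0) n :=
                    ENNReal.div_le_div_right (hnum n) _
                _ = _ := ENNReal.add_div
            refine le_trans heta1 ?_
            refine le_trans ((hC _ (hS.inter hTBl) (inter_subset_left.trans hsub)).2) ?_
            exact mul_le_mul_right (measure_mono inter_subset_right) _
    have htendsto : Tendsto (fun l => (∑ i ∈ Finset.range l, eta U m T Xs (T ⁻¹' S ∩ MMY Xs i))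
        + C * m (T '' ⋃ i ∈ Set.Ici l, MMY Xs i)) atTop
        (nhds ((∑' i, eta U m T Xs (T ⁻¹' S ∩ MMY Xs i)) + C * 0)) := by
      refine Tendsto.add (ENNReal.tendsto_nat_tsum _) ?_
      exact ENNReal.Tendsto.const_mul hMM.cond6 (Or.inr hCT)
    rw [mul_zero, add_zero] at htendsto
    exact ge_of_tendsto htendsto (Eventually.of_forall hle)
  · rw [ENNReal.tsum_eq_iSup_sum]
    refine iSup_le fun s => ?_
    rw [← eta_finset_sum hT _ hpmeas hpdisj s]
    exact eta_mono (iUnion₂_subset fun i _ => inter_subset_left)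

end withMM
end MMaux

open MMaux in
/-- For a Marco–Martens map `T` on the probability space `(X, ℬ, m)` with Marco–Martens cover
`(X_j)`, there exists a σ-finite `T`-invariant measure `μ` equivalent to `m` with
`0 < μ(X_j) < ∞` for every `j ≥ 0`. -/
theorem stmt14 {X : Type*} [MeasurableSpace X] (m : Measure X) [IsProbabilityMeasure m]
    (T : X → X) (Xs : ℕ → Set X) (K : ℕ → ℝ) (hMM : MarcoMartens m T Xs K) :
    ∃ μ : Measure X, SigmaFinite μ ∧
      (∀ A : Set X, MeasurableSet A → μ (T ⁻¹' A) = μ A) ∧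
      μ ≪ m ∧ m ≪ μ ∧
      ∀ j : ℕ, 0 < μ (Xs j) ∧ μ (Xs j) < ⊤ := by
  classical
  set U : Ultrafilter ℕ := Ultrafilter.of atTop with hUdef
  have hU : (U : Filter ℕ) ≤ atTop := Ultrafilter.of_le atTop
  have hT := hMM.measurable_T
  set Y : ℕ → Set X := MMY Xs with hYdef
  have hYmeas : ∀ i, MeasurableSet (Y i) := MMY_meas hMM.meas_Xs
  have hYsub : ∀ i, Y i ⊆ Xs i := fun i => MMY_subset i
  have hYdisj : Pairwise (Function.onFun Disjoint Y) := MMY_disjoint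
  set W : Set X := ⋃ i, Y i with hWdef
  have hWmeas : MeasurableSet W := MeasurableSet.iUnion hYmeas
  have hWnull : m (univ \ W) = 0 := by
    rw [hWdef, hYdef, iUnion_MMY]; exact hMM.cover
  have hN : ∀ {N : Set X}, N ⊆ univ \ W → m N = 0 :=
    fun hsub => measure_mono_null hsub hWnull
  -- the component measures
  have hadd : ∀ i : ℕ, ∀ f : ℕ → Set X, (∀ k, MeasurableSet (f k)) →
      Pairwise (Function.onFun Disjoint f) →
      eta U m T Xs ((⋃ k, f k) ∩ Y i) = ∑' k, eta U m T Xs (f k ∩ Y i) := by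
    intro i f hf hd
    have : (⋃ k, f k) ∩ Y i = ⋃ k, (f k ∩ Y i) := by rw [iUnion_inter]
    rw [this]
    refine eta_iUnion_within hMM i _ (fun k => (hf k).inter (hYmeas i))
      (fun a b hab => ((hd hab).inter_left _).inter_right _)
      (fun k => inter_subset_right.trans (hYsub i))
  set μi : ℕ → Measure X := fun i =>
    Measure.ofMeasurable (fun A _ => eta U m T Xs (A ∩ Y i))
      (by show eta U m T Xs (∅ ∩ Y i) = 0
          rw [empty_inter]; exact eta_empty)
      (fun f hf hd => hadd i f hf hd) with hμidef
  have hμiapp : ∀ i : ℕ, ∀ A : Set X, MeasurableSet A →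
      μi i A = eta U m T Xs (A ∩ Y i) := by
    intro i A hA
    rw [hμidef]
    exact Measure.ofMeasurable_apply A hA
  set μ : Measure X := Measure.sum μi with hμdef
  have hμapp : ∀ A : Set X, MeasurableSet A → μ A = ∑' i, eta U m T Xs (A ∩ Y i) := by
    intro A hA
    rw [hμdef, Measure.sum_apply _ hA]
    exact tsum_congr fun i => hμiapp i A hA
  refine ⟨μ, ?_, ?_, ?_, ?_, ?_⟩
  · -- SigmaFinite
    refine ⟨⟨⟨fun n => Y n ∪ (univ \ W), fun _ => mem_univ _, ?_, ?_⟩⟩⟩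
    · intro n
      have h1 : μ (Y n) < ⊤ := by
        rw [hμapp _ (hYmeas n)]
        obtain ⟨C, hCT, hC⟩ := key_upper (U := U) hMM n
        have : ∀ i, i ≠ n → eta U m T Xs (Y n ∩ Y i) = 0 := by
          intro i hin
          rw [(hYdisj (Ne.symm hin)).inter_eq]
          exact eta_empty
        rw [tsum_eq_single n fun i hin => this i hin]
        rw [inter_self]
        refine lt_of_le_of_lt ((hC _ (hYmeas n) (hYsub n)).2) ?_
        exact ENNReal.mul_lt_top hCT.lt_top (measure_lt_top m _)
      have h2 : μ (univ \ W) = 0 := by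
        rw [hμapp _ (MeasurableSet.univ.diff hWmeas)]
        have : ∀ i, (univ \ W) ∩ Y i = ∅ := by
          intro i
          rw [eq_empty_iff_forall_notMem]
          rintro x ⟨hx1, hx2⟩
          exact hx1.2 (mem_iUnion.2 ⟨i, hx2⟩)
        simp only [this, eta_empty, tsum_zero]
      calc μ (Y n ∪ (univ \ W)) ≤ μ (Y n) + μ (univ \ W) := measure_union_le _ _
        _ < ⊤ := by rw [h2, add_zero]; exact h1
    · rw [eq_univ_iff_forall]
      intro x
      by_cases hx : x ∈ W
      · obtain ⟨i, hi⟩ := mem_iUnion.1 hx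
        exact mem_iUnion.2 ⟨i, Or.inl hi⟩
      · exact mem_iUnion.2 ⟨0, Or.inr ⟨mem_univ x, hx⟩⟩
  · -- invariance
    intro A hA
    have hdisjpre : Pairwise (Function.onFun Disjoint fun j => T ⁻¹' (A ∩ Y j)) := fun a b hab =>
      Disjoint.preimage T (((hYdisj hab).inter_left' _).inter_right' _)
    have hpre_meas : ∀ j, MeasurableSet (T ⁻¹' (A ∩ Y j)) := fun j => hT (hA.inter (hYmeas j))
    have hstep : ∀ i, eta U m T Xs (T ⁻¹' A ∩ Y i)
        = ∑' j, eta U m T Xs (T ⁻¹' (A ∩ Y j) ∩ Y i) := by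
      intro i
      set U1 : Set X := ⋃ j, T ⁻¹' (A ∩ Y j) with hU1
      set U2 : Set X := T ⁻¹' (A \ W) with hU2
      have hU1meas : MeasurableSet U1 := MeasurableSet.iUnion hpre_meas
      have hU2meas : MeasurableSet U2 := hT (hA.diff hWmeas)
      have hU2null : m U2 = 0 := by
        rw [hU2, ← Measure.map_apply hT (hA.diff hWmeas)]
        exact hMM.quasi_invariant (hN (diff_subset_diff (subset_univ A) le_rfl))
      have hsplit : T ⁻¹' A = U1 ∪ U2 := by
        have hAW : (A ∩ ⋃ i, Y i) ∪ A \ W = A := by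
          rw [← hWdef]; exact inter_union_diff A W
        rw [hU1, hU2, ← preimage_iUnion, ← preimage_union, ← inter_iUnion, hAW]
      have hμiU2 : μi i U2 = 0 := by
        rw [hμiapp i U2 hU2meas]
        exact eta_null hMM (hU2meas.inter (hYmeas i))
          (measure_mono_null inter_subset_left hU2null)
      have e1 : μi i (T ⁻¹' A) = μi i U1 := by
        apply le_antisymm
        · calc μi i (T ⁻¹' A) = μi i (U1 ∪ U2) := by rw [hsplit]
            _ ≤ μi i U1 + μi i U2 := measure_union_le _ _
            _ = μi i U1 := by rw [hμiU2, add_zero]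
        · exact measure_mono (hsplit ▸ subset_union_left)
      have e2 : μi i U1 = ∑' j, μi i (T ⁻¹' (A ∩ Y j)) :=
        measure_iUnion hdisjpre hpre_meas
      calc eta U m T Xs (T ⁻¹' A ∩ Y i) = μi i (T ⁻¹' A) := (hμiapp i _ (hT hA)).symm
        _ = ∑' j, μi i (T ⁻¹' (A ∩ Y j)) := by rw [e1, e2]
        _ = ∑' j, eta U m T Xs (T ⁻¹' (A ∩ Y j) ∩ Y i) :=
            tsum_congr fun j => hμiapp i _ (hpre_meas j)
    calc μ (T ⁻¹' A) = ∑' i, eta U m T Xs (T ⁻¹' A ∩ Y i) := hμapp _ (hT hA)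
      _ = ∑' i, ∑' j, eta U m T Xs (T ⁻¹' (A ∩ Y j) ∩ Y i) := tsum_congr hstep
      _ = ∑' j, ∑' i, eta U m T Xs (T ⁻¹' (A ∩ Y j) ∩ Y i) := ENNReal.tsum_comm
      _ = ∑' j, eta U m T Xs (T ⁻¹' (A ∩ Y j)) := by
          refine tsum_congr fun j => ?_
          exact (eta_preimage_tsum hU hMM (hA.inter (hYmeas j))
            (inter_subset_right.trans (hYsub j))).symm
      _ = ∑' j, eta U m T Xs (A ∩ Y j) :=
          tsum_congr fun j => eta_preimage hU hMM _
      _ = μ A := (hμapp A hA).symm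
  · -- μ ≪ m
    intro A hA
    have hBnull : m (toMeasurable m A) = 0 := by rwa [measure_toMeasurable]
    refine measure_mono_null (subset_toMeasurable m A) ?_
    rw [hμapp _ (measurableSet_toMeasurable m A)]
    rw [ENNReal.tsum_eq_zero]
    intro i
    exact eta_null hMM ((measurableSet_toMeasurable m A).inter (hYmeas i))
      (measure_mono_null inter_subset_left hBnull)
  · -- m ≪ μ
    intro A hA
    have hBmeas := measurableSet_toMeasurable μ A
    have hμB : μ (toMeasurable μ A) = 0 := by rwa [measure_toMeasurable]
    set B := toMeasurable μ A with hBdef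
    have hEta : ∀ i, eta U m T Xs (B ∩ Y i) = 0 := by
      rw [hμapp _ hBmeas] at hμB
      exact ENNReal.tsum_eq_zero.1 hμB
    have hmBY : ∀ i, m (B ∩ Y i) = 0 := by
      intro i
      obtain ⟨c, hc0, hc⟩ := key_lower hU hMM i
      have := hc _ (hBmeas.inter (hYmeas i)) (inter_subset_right.trans (hYsub i))
      rw [hEta i, nonpos_iff_eq_zero, mul_eq_zero] at this
      exact this.resolve_left hc0
    have hmB : m B = 0 := by
      have h1 : m (B ∩ W) = 0 := by
        rw [hWdef, inter_iUnion]
        refine le_antisymm (le_trans (measure_iUnion_le _) ?_) zero_le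
        simp [hmBY]
      have h2 : m (B \ W) = 0 := hN (diff_subset_diff (subset_univ B) le_rfl)
      refine le_antisymm ?_ zero_le
      calc m B ≤ m (B ∩ W) + m (B \ W) := measure_le_inter_add_diff m B W
        _ = 0 := by rw [h1, h2, add_zero]
    exact measure_mono_null (subset_toMeasurable μ A) hmB
  · -- positivity and finiteness
    intro j
    have hμXj : μ (Xs j) = ∑' i, eta U m T Xs (Xs j ∩ Y i) := hμapp _ (hMM.meas_Xs j)
    constructor
    · -- positivity
      have hex : ∃ i, m (Xs j ∩ Y i) ≠ 0 := by
        by_contra h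
        push_neg at h
        have h1 : m (Xs j ∩ W) = 0 := by
          rw [hWdef, inter_iUnion]
          refine le_antisymm (le_trans (measure_iUnion_le _) ?_) zero_le
          simp [h]
        have h2 : m (Xs j \ W) = 0 := hN (diff_subset_diff (subset_univ _) le_rfl)
        have : m (Xs j) = 0 := by
          refine le_antisymm ?_ zero_le
          calc m (Xs j) ≤ m (Xs j ∩ W) + m (Xs j \ W) := measure_le_inter_add_diff m _ W
            _ = 0 := by rw [h1, h2, add_zero]
        exact absurd this (mXs_pos hMM j).ne'
      obtain ⟨i, hi⟩ := hex
      obtain ⟨c, hc0, hc⟩ := key_lower hU hMM i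
      have hle : c * m (Xs j ∩ Y i) ≤ eta U m T Xs (Xs j ∩ Y i) :=
        hc _ ((hMM.meas_Xs j).inter (hYmeas i)) (inter_subset_right.trans (hYsub i))
      have hpos : 0 < eta U m T Xs (Xs j ∩ Y i) :=
        lt_of_lt_of_le (pos_iff_ne_zero.2 (mul_ne_zero hc0 hi)) hle
      rw [hμXj]
      exact lt_of_lt_of_le hpos (ENNReal.le_tsum i)
    · -- finiteness
      rw [hμXj]
      have hzero : ∀ i ∉ Finset.range (j+1), eta U m T Xs (Xs j ∩ Y i) = 0 := by
        intro i hi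
        have hij : j < i := by simpa using Nat.lt_of_succ_le (Nat.succ_le_of_lt (by
          simpa [Finset.mem_range] using hi))
        have : Xs j ∩ Y i = ∅ := by
          rw [eq_empty_iff_forall_notMem]
          rintro x ⟨hx1, hx2⟩
          exact hx2.2 (mem_biUnion hij hx1)
        rw [this]; exact eta_empty
      rw [tsum_eq_sum hzero]
      refine ENNReal.sum_lt_top.2 fun i _ => ?_
      obtain ⟨C, hCT, hC⟩ := key_upper (U := U) hMM i
      refine lt_of_le_of_lt ((hC _ ((hMM.meas_Xs j).inter (hYmeas i))
        (inter_subset_right.trans (hYsub i))).2) ?_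
      exact ENNReal.mul_lt_top hCT.lt_top (measure_lt_top m _)
end

section
/- Let T be a Marco–Martens map on the probability space (X, ℬ, m) with Marco–Martens cover {X_j}_{j≥0}, and suppose in addition that T is ergodic with respect to m, i.e. every A ∈ ℬ with T⁻¹(A) = A satisfies m(A) = 0 or m(X \ A) = 0. Then the σ-finite T-invariant measure equivalent to m is unique up to a positive multiplicative constant: if μ₁ and μ₂ are σ-finite T-invariant measures on (X, ℬ), each equivalent to m, then there exists a constant c > 0 such that μ₁ = c·μ₂. -/
open MeasureTheory Set Filter
open scoped ENNReal NNReal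

section Aux
variable {X : Type*} [MeasurableSpace X] {m : Measure X} {T : X → X}

private lemma iter_image_meas (himg : ∀ A : Set X, MeasurableSet A → MeasurableSet (T '' A))
    (k : ℕ) {A : Set X} (hA : MeasurableSet A) : MeasurableSet (T^[k] '' A) := by
  induction k with
  | zero => simpa using hA
  | succ k ih =>
    rw [Function.iterate_succ', Set.image_comp]
    exact himg _ ih

private lemma null_preimage (hT : Measurable T) (hq : m.map T ≪ m) {N : Set X}
    (hN : MeasurableSet N) (h0 : m N = 0) : m (T ⁻¹' N) = 0 := by
  have : m.map T N = 0 := hq h0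
  rwa [Measure.map_apply hT hN] at this

private lemma null_preimage_iter (hT : Measurable T) (hq : m.map T ≪ m) (k : ℕ) {N : Set X}
    (hN : MeasurableSet N) (h0 : m N = 0) : m (T^[k] ⁻¹' N) = 0 := by
  induction k with
  | zero => simpa using h0
  | succ k ih =>
    rw [Function.iterate_succ, Set.preimage_comp]
    exact null_preimage hT hq ((hT.iterate k) hN) ih

private lemma tsum_eq_top_of_tail {f : ℕ → ℝ≥0∞} {ε : ℝ≥0∞} (hε : ε ≠ 0)
    (h : ∀ N, ε ≤ ∑' i, f (i + N)) : ∑' n, f n = ∞ := by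
  by_contra hne
  have h0 := ENNReal.tendsto_sum_nat_add f hne
  have : ε ≤ 0 := ge_of_tendsto' h0 h
  exact hε (le_antisymm this (zero_le))

variable {Xs : ℕ → Set X} {K : ℕ → ℝ}

private lemma div_transfer [IsProbabilityMeasure m] (hMM : MarcoMartens m T Xs K) (j : ℕ)
    {B A : Set X} (hB : MeasurableSet B) (hBs : B ⊆ Xs j) (hA : MeasurableSet A)
    (hAs : A ⊆ Xs j) (hApos : 0 < m A) (hdiv : ∑' n, m (T^[n] ⁻¹' B) = ∞) :
    ∑' n, m (T^[n] ⁻¹' A) = ∞ := by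
  by_contra hne
  have key : ∀ n, m (T^[n] ⁻¹' B) * m A ≤ ENNReal.ofReal (K j) * (m B * m (T^[n] ⁻¹' A)) :=
    fun n => hMM.cond4 j B A hB hA hBs hAs n
  have hL : ∑' n, m (T^[n] ⁻¹' B) * m A = ∞ := by
    rw [ENNReal.tsum_mul_right, hdiv]
    exact ENNReal.top_mul hApos.ne'
  have hsum := ENNReal.tsum_le_tsum key
  rw [hL] at hsum
  have hR : ∑' n, ENNReal.ofReal (K j) * (m B * m (T^[n] ⁻¹' A)) ≠ ∞ := by
    rw [ENNReal.tsum_mul_left, ENNReal.tsum_mul_left]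
    exact ENNReal.mul_ne_top ENNReal.ofReal_ne_top (ENNReal.mul_ne_top (measure_ne_top m _) hne)
  exact hR (top_le_iff.mp hsum)

private lemma divergence [IsProbabilityMeasure m] (hMM : MarcoMartens m T Xs K) (j : ℕ)
    {A : Set X} (hA : MeasurableSet A) (hsub : A ⊆ Xs j) (hpos : 0 < m A) :
    ∑' n, m (T^[n] ⁻¹' A) = ∞ := by
  have hT := hMM.measurable_T
  obtain ⟨k, hk⟩ := hMM.cond3 0 j
  set B₀ := Xs 0 ∩ T^[k] ⁻¹' Xs j with hB₀def
  have hB₀meas : MeasurableSet B₀ := (hMM.meas_Xs 0).inter ((hT.iterate k) (hMM.meas_Xs j))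
  set Bj := T^[k] '' B₀ ∩ Xs j with hBjdef
  have hBjmeas : MeasurableSet Bj :=
    (iter_image_meas hMM.image_meas k hB₀meas).inter (hMM.meas_Xs j)
  have hB₀sub : B₀ ⊆ T^[k] ⁻¹' Bj := fun x hx => ⟨Set.mem_image_of_mem _ hx, hx.2⟩
  have hBjpos : 0 < m Bj := by
    rcases (show (0:ℝ≥0∞) ≤ m Bj from zero_le).eq_or_lt with h0 | h0
    · exfalso
      have hnull := null_preimage_iter hT hMM.quasi_invariant k hBjmeas h0.symm
      have hle : m B₀ ≤ m (T^[k] ⁻¹' Bj) := measure_mono hB₀sub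
      rw [hnull] at hle
      exact hk.ne' (le_antisymm hle (zero_le))
    · exact h0
  have hdiv₀ : ∑' n, m (T^[n] ⁻¹' B₀) = ∞ :=
    div_transfer hMM 0 (hMM.meas_Xs 0) subset_rfl hB₀meas inter_subset_left hk hMM.cond5
  have hdivBj : ∑' n, m (T^[n] ⁻¹' Bj) = ∞ := by
    have h1 : ∀ n, m (T^[n] ⁻¹' B₀) ≤ m (T^[k + n] ⁻¹' Bj) := by
      intro n
      apply measure_mono
      rw [Function.iterate_add, Set.preimage_comp]
      exact Set.preimage_mono hB₀sub
    have h2 : ∑' n, m (T^[k + n] ⁻¹' Bj) ≤ ∑' n, m (T^[n] ⁻¹' Bj) :=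
      ENNReal.tsum_comp_le_tsum_of_injective (add_right_injective k) fun i => m (T^[i] ⁻¹' Bj)
    have h3 := ENNReal.tsum_le_tsum h1
    rw [hdiv₀] at h3
    exact top_le_iff.mp (h3.trans h2)
  exact div_transfer hMM j hBjmeas inter_subset_right hA hsub hpos hdivBj

private lemma no_wandering [IsProbabilityMeasure m] (hMM : MarcoMartens m T Xs K)
    {W : Set X} (hW : MeasurableSet W) (hwand : ∀ n, 0 < n → W ∩ T^[n] ⁻¹' W = ∅) :
    m W = 0 := by
  by_contra hW0
  have h1 : m (⋃ j, W ∩ Xs j) ≠ 0 := by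
    intro h
    apply hW0
    have hsub : W ⊆ (⋃ j, W ∩ Xs j) ∪ (univ \ ⋃ n, Xs n) := by
      intro x hx
      by_cases hx2 : x ∈ ⋃ n, Xs n
      · obtain ⟨j, hj⟩ := mem_iUnion.mp hx2
        exact Or.inl (mem_iUnion.mpr ⟨j, hx, hj⟩)
      · exact Or.inr ⟨trivial, hx2⟩
    have hle : m W ≤ m (⋃ j, W ∩ Xs j) + m (univ \ ⋃ n, Xs n) :=
      (measure_mono hsub).trans (measure_union_le _ _)
    rw [h, hMM.cover, add_zero] at hle
    exact le_antisymm hle (zero_le)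
  obtain ⟨j, hj⟩ : ∃ j, m (W ∩ Xs j) ≠ 0 := by
    by_contra hcon
    push_neg at hcon
    exact h1 (measure_iUnion_null fun j => hcon j)
  have hAmeas : MeasurableSet (W ∩ Xs j) := hW.inter (hMM.meas_Xs j)
  have hdiv := divergence hMM j hAmeas inter_subset_right (pos_iff_ne_zero.mpr hj)
  have key : ∀ a b : ℕ, a < b → (T^[a] ⁻¹' (W ∩ Xs j)) ∩ (T^[b] ⁻¹' (W ∩ Xs j)) = ∅ := by
    intro a b hab
    apply Set.eq_empty_iff_forall_notMem.mpr
    intro x hx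
    rw [mem_inter_iff, mem_preimage, mem_preimage] at hx
    obtain ⟨h1', h2'⟩ := hx
    have hmem : T^[a] x ∈ W ∩ T^[b - a] ⁻¹' W := by
      refine ⟨h1'.1, ?_⟩
      have heq : T^[b - a] (T^[a] x) = T^[b] x := by
        rw [← Function.iterate_add_apply, Nat.sub_add_cancel hab.le]
      rw [mem_preimage, heq]
      exact h2'.1
    rw [hwand (b - a) (Nat.sub_pos_of_lt hab)] at hmem
    exact hmem
  have hdisj : Pairwise (Function.onFun Disjoint fun n => T^[n] ⁻¹' (W ∩ Xs j)) := by
    intro a b hab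
    rcases hab.lt_or_gt with h | h
    · exact Set.disjoint_iff_inter_eq_empty.mpr (key a b h)
    · exact (Set.disjoint_iff_inter_eq_empty.mpr (key b a h)).symm
  have hμ : ∑' n, m (T^[n] ⁻¹' (W ∩ Xs j)) = m (⋃ n, T^[n] ⁻¹' (W ∩ Xs j)) :=
    (measure_iUnion hdisj fun n => (hMM.measurable_T.iterate n) hAmeas).symm
  rw [hdiv] at hμ
  exact (measure_ne_top m _) hμ.symm

private lemma recurrence [IsProbabilityMeasure m] (hMM : MarcoMartens m T Xs K)
    {A : Set X} (hA : MeasurableSet A) :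
    m (A \ {x | ∀ N, ∃ n, N ≤ n ∧ T^[n] x ∈ A}) = 0 := by
  have hT := hMM.measurable_T
  set B := A \ ⋃ n, T^[n + 1] ⁻¹' A with hBdef
  have hBmeas : MeasurableSet B := hA.diff (MeasurableSet.iUnion fun n => (hT.iterate (n + 1)) hA)
  have hBnull : m B = 0 := by
    apply no_wandering hMM hBmeas
    intro n hn
    apply Set.eq_empty_iff_forall_notMem.mpr
    intro x hx
    rw [mem_inter_iff, mem_preimage] at hx
    obtain ⟨hx1, hx2⟩ := hx
    apply hx1.2
    refine mem_iUnion.mpr ⟨n - 1, ?_⟩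
    rw [mem_preimage, Nat.sub_add_cancel hn]
    exact hx2.1
  have hsub : A \ {x | ∀ N, ∃ n, N ≤ n ∧ T^[n] x ∈ A} ⊆ ⋃ k, T^[k] ⁻¹' B := by
    rintro x ⟨hxA, hxL⟩
    simp only [mem_setOf_eq, not_forall] at hxL
    obtain ⟨N, hN⟩ := hxL
    push_neg at hN
    set S := {n | T^[n] x ∈ A} with hSdef
    have hS0 : 0 ∈ S := by simpa [hSdef] using hxA
    have hSbdd : BddAbove S := by
      refine ⟨N, fun n hn => ?_⟩
      by_contra hc
      exact hN n (le_of_not_ge hc) hn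
    have hk : sSup S ∈ S := Nat.sSup_mem ⟨0, hS0⟩ hSbdd
    refine mem_iUnion.mpr ⟨sSup S, ?_⟩
    rw [mem_preimage]
    refine ⟨hk, ?_⟩
    intro hmem
    obtain ⟨i, hi⟩ := mem_iUnion.mp hmem
    rw [mem_preimage, ← Function.iterate_add_apply] at hi
    have hiS : i + 1 + sSup S ∈ S := hi
    have h2 := le_csSup hSbdd hiS
    omega
  refine le_antisymm ?_ (zero_le)
  calc m (A \ {x | ∀ N, ∃ n, N ≤ n ∧ T^[n] x ∈ A})
      ≤ m (⋃ k, T^[k] ⁻¹' B) := measure_mono hsub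
    _ ≤ ∑' k, m (T^[k] ⁻¹' B) := measure_iUnion_le _
    _ = 0 := by
        have : ∀ k : ℕ, m (T^[k] ⁻¹' B) = 0 :=
          fun k => null_preimage_iter hT hMM.quasi_invariant k hBmeas hBnull
        simp [this]

private lemma delta_eq_zero {μ₂ : Measure X} [IsProbabilityMeasure m] [SigmaFinite μ₂]
    (hT : Measurable T)
    (hrec : ∀ A : Set X, MeasurableSet A → m (A \ {x | ∀ N, ∃ n, N ≤ n ∧ T^[n] x ∈ A}) = 0)
    {ρ δ : Measure X} (hδm : δ ≪ m) (hm₂ : m ≪ μ₂)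
    (hfin : ∀ s : Set X, MeasurableSet s → μ₂ s < ∞ → ρ s ≠ ∞)
    (hsum : ∀ (N : ℕ) (A : Set X), MeasurableSet A →
      (∑ n ∈ Finset.range N, δ (T^[n] ⁻¹' A)) ≤ ρ A) :
    δ = 0 := by
  ext A hA
  simp only [Measure.coe_zero, Pi.zero_apply]
  by_contra hδA
  have hAU : δ A = ⨆ k, δ (A ∩ spanningSets μ₂ k) := by
    conv_lhs => rw [show A = ⋃ k, A ∩ spanningSets μ₂ k by
      rw [← inter_iUnion, iUnion_spanningSets, inter_univ]]
    exact Monotone.measure_iUnion fun i j hij =>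
      inter_subset_inter_right _ (monotone_spanningSets μ₂ hij)
  obtain ⟨k, hk⟩ : ∃ k, δ (A ∩ spanningSets μ₂ k) ≠ 0 := by
    by_contra hall
    push_neg at hall
    apply hδA
    rw [hAU]
    simp [hall]
  set A' := A ∩ spanningSets μ₂ k with hA'def
  have hA'meas : MeasurableSet A' := hA.inter (measurableSet_spanningSets μ₂ k)
  have hμ₂A' : μ₂ A' < ∞ :=
    (measure_mono inter_subset_right).trans_lt (measure_spanningSets_lt_top μ₂ k)
  have hρA' : ρ A' ≠ ∞ := hfin _ hA'meas hμ₂A'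
  have htsum : ∑' n, δ (T^[n] ⁻¹' A') ≤ ρ A' := by
    rw [ENNReal.tsum_eq_iSup_nat]
    exact iSup_le fun N => hsum N A' hA'meas
  have hδrec : δ (A' \ {x | ∀ N, ∃ n, N ≤ n ∧ T^[n] x ∈ A'}) = 0 := hδm (hrec A' hA'meas)
  have hδLim : δ A' ≤ δ (A' ∩ {x | ∀ N, ∃ n, N ≤ n ∧ T^[n] x ∈ A'}) := by
    have := measure_le_inter_add_diff δ A' {x | ∀ N, ∃ n, N ≤ n ∧ T^[n] x ∈ A'}
    rwa [hδrec, add_zero] at this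
  have htail : ∀ N, δ A' ≤ ∑' i, δ (T^[i + N] ⁻¹' A') := by
    intro N
    refine hδLim.trans ?_
    have hsub : A' ∩ {x | ∀ N, ∃ n, N ≤ n ∧ T^[n] x ∈ A'} ⊆ ⋃ i, T^[i + N] ⁻¹' A' := by
      rintro x ⟨-, hx⟩
      obtain ⟨n, hn, hnA⟩ := hx N
      refine mem_iUnion.mpr ⟨n - N, ?_⟩
      rw [mem_preimage, Nat.sub_add_cancel hn]
      exact hnA
    exact (measure_mono hsub).trans (measure_iUnion_le _)
  have htop := tsum_eq_top_of_tail (f := fun n => δ (T^[n] ⁻¹' A')) hk htail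
  rw [htop] at htsum
  exact hρA' (top_le_iff.mp htsum)

private lemma exists_step {c : ℝ≥0} {v : ℝ≥0∞} (hv : (c : ℝ≥0∞) < v) :
    ∃ k : ℕ, ((c + ((k : ℝ≥0) + 1)⁻¹ : ℝ≥0) : ℝ≥0∞) ≤ v := by
  rcases eq_or_ne v ∞ with hv' | hv'
  · exact ⟨0, by simp [hv']⟩
  · lift v to ℝ≥0 using hv'
    rw [ENNReal.coe_lt_coe] at hv
    have hv0 : (0 : ℝ) < (v : ℝ) - c := sub_pos.mpr hv
    obtain ⟨n, hn⟩ := exists_nat_one_div_lt hv0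
    refine ⟨n, ?_⟩
    rw [ENNReal.coe_le_coe, ← NNReal.coe_le_coe]
    push_cast
    rw [one_div] at hn
    linarith

private lemma rho_invariant [IsProbabilityMeasure m] (hMM : MarcoMartens m T Xs K)
    {μ₁ μ₂ : Measure X} [SigmaFinite μ₁] [SigmaFinite μ₂]
    (hmap₁ : μ₁.map T = μ₁) (hmap₂ : μ₂.map T = μ₂)
    (h12 : μ₁ ≪ μ₂) (h2m : μ₂ ≪ m) (hm2 : m ≪ μ₂) (c : ℝ≥0) :
    (μ₂.withDensity fun x => min (μ₁.rnDeriv μ₂ x) (c : ℝ≥0∞)).map T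
      = μ₂.withDensity fun x => min (μ₁.rnDeriv μ₂ x) (c : ℝ≥0∞) := by
  have hT : Measurable T := hMM.measurable_T
  set h : X → ℝ≥0∞ := μ₁.rnDeriv μ₂ with hhdef
  have hh : Measurable h := Measure.measurable_rnDeriv μ₁ μ₂
  have hg : Measurable fun x => min (h x) (c : ℝ≥0∞) := hh.min measurable_const
  have hwd : μ₂.withDensity h = μ₁ := Measure.withDensity_rnDeriv_eq μ₁ μ₂ h12
  set ρ := μ₂.withDensity fun x => min (h x) (c : ℝ≥0∞) with hρdef
  have hρ₁ : ρ ≤ μ₁ := by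
    rw [← hwd]
    exact withDensity_mono (Eventually.of_forall fun x => min_le_left _ _)
  have hρ₂ : ρ ≤ (c : ℝ≥0∞) • μ₂ := by
    rw [← withDensity_const]
    exact withDensity_mono (Eventually.of_forall fun x => min_le_right _ _)
  set ν := ρ.map T with hνdef
  have hν₁ : ν ≤ μ₁ := by
    rw [hνdef, ← hmap₁]
    exact Measure.map_mono hρ₁ hT
  have hν₂ : ν ≤ (c : ℝ≥0∞) • μ₂ := by
    calc ν ≤ ((c : ℝ≥0∞) • μ₂).map T := Measure.map_mono hρ₂ hT
      _ = (c : ℝ≥0∞) • μ₂.map T := Measure.map_smul _ _ _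
      _ = (c : ℝ≥0∞) • μ₂ := by rw [hmap₂]
  haveI : SigmaFinite ν := Measure.sigmaFinite_of_le μ₁ hν₁
  have hνac : ν ≪ μ₂ := by
    intro s hs
    have h2 := hν₂ s
    rw [Measure.smul_apply, hs, smul_eq_mul, mul_zero] at h2
    exact le_antisymm h2 (zero_le)
  set u := ν.rnDeriv μ₂ with hudef
  have hu : Measurable u := Measure.measurable_rnDeriv ν μ₂
  have hνwd : μ₂.withDensity u = ν := Measure.withDensity_rnDeriv_eq ν μ₂ hνac
  have hu_le_h : u ≤ᵐ[μ₂] h := by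
    apply ae_le_of_forall_setLIntegral_le_of_sigmaFinite hu
    intro s hs hsfin
    calc ∫⁻ x in s, u x ∂μ₂ = ν s := by rw [← hνwd, withDensity_apply _ hs]
      _ ≤ μ₁ s := hν₁ s
      _ = ∫⁻ x in s, h x ∂μ₂ := by rw [← hwd, withDensity_apply _ hs]
  have hu_le_c : u ≤ᵐ[μ₂] fun _ => (c : ℝ≥0∞) := by
    apply ae_le_of_forall_setLIntegral_le_of_sigmaFinite hu
    intro s hs hsfin
    calc ∫⁻ x in s, u x ∂μ₂ = ν s := by rw [← hνwd, withDensity_apply _ hs]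
      _ ≤ (c : ℝ≥0∞) * μ₂ s := by
          have h2 := hν₂ s
          rwa [Measure.smul_apply, smul_eq_mul] at h2
      _ = ∫⁻ _ in s, (c : ℝ≥0∞) ∂μ₂ := (setLIntegral_const s _).symm
  have hu_le : u ≤ᵐ[μ₂] fun x => min (h x) (c : ℝ≥0∞) := by
    filter_upwards [hu_le_h, hu_le_c] with x h1 h2
    exact le_min h1 h2
  set w := fun x => min (h x) (c : ℝ≥0∞) - u x with hwdef
  have hw : Measurable w := hg.sub hu
  set δ := μ₂.withDensity w with hδdef
  have hadd : ν + δ = ρ := by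
    rw [← hνwd, hδdef, ← withDensity_add_left hu w]
    apply withDensity_congr_ae
    filter_upwards [hu_le] with x hx
    simpa using add_tsub_cancel_of_le hx
  have hstep : ∀ n : ℕ, ρ.map T^[n + 1] = (ρ.map T^[n]).map T := by
    intro n
    rw [Measure.map_map hT (hT.iterate n), ← Function.iterate_succ']
  have hdec : ∀ n : ℕ, ρ.map T^[n] = ρ.map T^[n + 1] + δ.map T^[n] := by
    intro n
    induction n with
    | zero =>
      simpa [Function.iterate_zero, Measure.map_id] using hadd.symm
    | succ n ih =>
      calc ρ.map T^[n + 1] = (ρ.map T^[n]).map T := hstep n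
        _ = (ρ.map T^[n + 1] + δ.map T^[n]).map T := by rw [← ih]
        _ = (ρ.map T^[n + 1]).map T + (δ.map T^[n]).map T := Measure.map_add _ _ hT
        _ = ρ.map T^[n + 2] + δ.map T^[n + 1] := by
            rw [← hstep (n + 1), Measure.map_map hT (hT.iterate n), ← Function.iterate_succ']
  have htel : ∀ N : ℕ, (∑ n ∈ Finset.range N, δ.map T^[n]) + ρ.map T^[N] = ρ := by
    intro N
    induction N with
    | zero => simp [Function.iterate_zero, Measure.map_id]
    | succ N ih =>
      rw [Finset.sum_range_succ, add_assoc, add_comm (δ.map T^[N]) _, ← hdec N, ih]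
  have hsum : ∀ (N : ℕ) (A : Set X), MeasurableSet A →
      (∑ n ∈ Finset.range N, δ (T^[n] ⁻¹' A)) ≤ ρ A := by
    intro N A hA
    have happ := congrArg (fun μ : Measure X => μ A) (htel N)
    simp only [Measure.coe_add, Pi.add_apply] at happ
    rw [Measure.coe_finset_sum, Finset.sum_apply] at happ
    have hmaps : ∀ n ∈ Finset.range N, δ.map T^[n] A = δ (T^[n] ⁻¹' A) :=
      fun n _ => Measure.map_apply (hT.iterate n) hA
    rw [Finset.sum_congr rfl hmaps] at happ
    calc (∑ n ∈ Finset.range N, δ (T^[n] ⁻¹' A)) ≤ _ + (ρ.map T^[N]) A := le_add_right le_rfl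
      _ = ρ A := happ
  have hδ0 : δ = 0 := by
    refine delta_eq_zero hT (fun A hA => recurrence hMM hA)
      ((withDensity_absolutelyContinuous μ₂ w).trans h2m) hm2 (fun s hs hsfin => ?_) hsum
    have := hρ₂ s
    rw [Measure.smul_apply, smul_eq_mul] at this
    exact (this.trans_lt (ENNReal.mul_lt_top ENNReal.coe_lt_top hsfin)).ne
  have hw0 : w =ᵐ[μ₂] 0 := (withDensity_eq_zero_iff hw.aemeasurable).mp hδ0
  have hgu : u =ᵐ[μ₂] fun x => min (h x) (c : ℝ≥0∞) := by
    filter_upwards [hu_le, hw0] with x h1 h2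
    exact le_antisymm h1 (tsub_eq_zero_iff_le.mp h2)
  calc ρ.map T = ν := rfl
    _ = μ₂.withDensity u := hνwd.symm
    _ = ρ := withDensity_congr_ae hgu

private lemma E_invariant [IsProbabilityMeasure m] (hMM : MarcoMartens m T Xs K)
    {μ₁ μ₂ : Measure X} [SigmaFinite μ₁] [SigmaFinite μ₂]
    (hmap₁ : μ₁.map T = μ₁) (hmap₂ : μ₂.map T = μ₂)
    (h12 : μ₁ ≪ μ₂) (h2m : μ₂ ≪ m) (hm2 : m ≪ μ₂) (c : ℝ≥0) :
    μ₂ (T ⁻¹' {x | (c : ℝ≥0∞) < μ₁.rnDeriv μ₂ x} \ {x | (c : ℝ≥0∞) < μ₁.rnDeriv μ₂ x}) = 0 ∧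
    μ₂ ({x | (c : ℝ≥0∞) < μ₁.rnDeriv μ₂ x} \ T ⁻¹' {x | (c : ℝ≥0∞) < μ₁.rnDeriv μ₂ x}) = 0 := by
  have hT : Measurable T := hMM.measurable_T
  set h : X → ℝ≥0∞ := μ₁.rnDeriv μ₂ with hhdef
  have hh : Measurable h := Measure.measurable_rnDeriv μ₁ μ₂
  have hwd : μ₂.withDensity h = μ₁ := Measure.withDensity_rnDeriv_eq μ₁ μ₂ h12
  set E := {x | (c : ℝ≥0∞) < h x} with hEdef
  have hE : MeasurableSet E := measurableSet_lt measurable_const hh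
  have hfull : ∀ S : Set X, MeasurableSet S → μ₂ (T ⁻¹' S) = μ₂ S := by
    intro S hS
    conv_rhs => rw [← hmap₂]
    rw [Measure.map_apply hT hS]
  -- key inequalities
  have key : ∀ c' : ℝ≥0, c < c' → ∀ A : Set X, MeasurableSet A →
      μ₂ (T ⁻¹' A ∩ {x | (c' : ℝ≥0∞) ≤ h x}) ≤ μ₂ (A ∩ E) ∧
      μ₂ (A ∩ {x | (c' : ℝ≥0∞) ≤ h x}) ≤ μ₂ (T ⁻¹' A ∩ E) := by
    intro c' hcc' A hA
    have hgc : Measurable fun x => min (h x) (c : ℝ≥0∞) := hh.min measurable_const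
    have hminle : ∀ x, min (h x) (c : ℝ≥0∞) ≤ min (h x) (c' : ℝ≥0∞) :=
      fun x => min_le_min le_rfl (ENNReal.coe_le_coe.mpr hcc'.le)
    set τ := μ₂.withDensity
      (fun x => min (h x) ((c' : ℝ≥0∞)) - min (h x) ((c : ℝ≥0∞))) with hτdef
    set ρc := μ₂.withDensity fun x => min (h x) (c : ℝ≥0∞) with hρcdef
    have hρc₁ : ρc ≤ μ₁ := by
      rw [← hwd]
      exact withDensity_mono (Eventually.of_forall fun x => min_le_left _ _)
    haveI : SigmaFinite ρc := Measure.sigmaFinite_of_le μ₁ hρc₁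
    have haddτ : ρc + τ = μ₂.withDensity fun x => min (h x) (c' : ℝ≥0∞) := by
      rw [hρcdef, hτdef, ← withDensity_add_left hgc]
      apply withDensity_congr_ae
      exact Eventually.of_forall fun x => add_tsub_cancel_of_le (hminle x)
    have hmapeq : ρc + τ.map T = ρc + τ := by
      calc ρc + τ.map T
          = ρc.map T + τ.map T := by
            rw [hρcdef, rho_invariant hMM hmap₁ hmap₂ h12 h2m hm2 c]
        _ = (ρc + τ).map T := (Measure.map_add _ _ hT).symm
        _ = (μ₂.withDensity fun x => min (h x) (c' : ℝ≥0∞)).map T := by rw [haddτ]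
        _ = μ₂.withDensity fun x => min (h x) (c' : ℝ≥0∞) :=
            rho_invariant hMM hmap₁ hmap₂ h12 h2m hm2 c'
        _ = ρc + τ := haddτ.symm
    have hτinv : τ (T ⁻¹' A) = τ A := by
      have := (Measure.add_right_inj ρc (τ.map T) τ).mp hmapeq
      rw [← Measure.map_apply hT hA, this]
    set d := (c' : ℝ≥0∞) - (c : ℝ≥0∞) with hddef
    have hd0 : d ≠ 0 := by
      rw [hddef, ← pos_iff_ne_zero, tsub_pos_iff_lt]
      exact ENNReal.coe_lt_coe.mpr hcc'
    have hdtop : d ≠ ∞ := ((tsub_le_self).trans_lt ENNReal.coe_lt_top).ne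
    have hlow : ∀ S : Set X, MeasurableSet S →
        d * μ₂ (S ∩ {x | (c' : ℝ≥0∞) ≤ h x}) ≤ τ S := by
      intro S hS
      have hV : MeasurableSet (S ∩ {x | (c' : ℝ≥0∞) ≤ h x}) :=
        hS.inter (measurableSet_le measurable_const hh)
      calc d * μ₂ (S ∩ {x | (c' : ℝ≥0∞) ≤ h x})
          = ∫⁻ _ in S ∩ {x | (c' : ℝ≥0∞) ≤ h x}, d ∂μ₂ := (setLIntegral_const _ _).symm
        _ ≤ ∫⁻ x in S ∩ {x | (c' : ℝ≥0∞) ≤ h x},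
              (min (h x) ((c' : ℝ≥0∞)) - min (h x) ((c : ℝ≥0∞))) ∂μ₂ := by
            apply setLIntegral_mono' hV
            intro x hx
            have hx' : (c' : ℝ≥0∞) ≤ h x := hx.2
            rw [min_eq_right hx', min_eq_right ((ENNReal.coe_le_coe.mpr hcc'.le).trans hx')]
        _ = τ (S ∩ {x | (c' : ℝ≥0∞) ≤ h x}) := (withDensity_apply _ hV).symm
        _ ≤ τ S := measure_mono inter_subset_left
    have hupp : ∀ S : Set X, MeasurableSet S → τ S ≤ d * μ₂ (S ∩ E) := by
      intro S hS
      have hSE : MeasurableSet (S ∩ E) := hS.inter hE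
      have hsplit : τ (S ∩ E) + τ (S \ E) = τ S := measure_inter_add_diff S hE
      have hτdiff : τ (S \ E) = 0 := by
        rw [hτdef, withDensity_apply _ (hS.diff hE)]
        have : ∀ x ∈ S \ E, (min (h x) ((c' : ℝ≥0∞)) - min (h x) ((c : ℝ≥0∞))) = 0 := by
          intro x hx
          have hxc : h x ≤ (c : ℝ≥0∞) := not_lt.mp hx.2
          rw [min_eq_left hxc, min_eq_left (hxc.trans (ENNReal.coe_le_coe.mpr hcc'.le)),
            tsub_self]
        refine le_antisymm ?_ (zero_le)
        calc ∫⁻ x in S \ E, (min (h x) ((c' : ℝ≥0∞)) - min (h x) ((c : ℝ≥0∞))) ∂μ₂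
            ≤ ∫⁻ _ in S \ E, 0 ∂μ₂ := setLIntegral_mono' (hS.diff hE) fun x hx => (this x hx).le
          _ = 0 := by simp
      have hτSE : τ (S ∩ E) ≤ d * μ₂ (S ∩ E) := by
        rw [hτdef, withDensity_apply _ hSE]
        calc ∫⁻ x in S ∩ E, (min (h x) ((c' : ℝ≥0∞)) - min (h x) ((c : ℝ≥0∞))) ∂μ₂
            ≤ ∫⁻ _ in S ∩ E, d ∂μ₂ := by
              apply setLIntegral_mono' hSE
              intro x hx
              have hxc : (c : ℝ≥0∞) ≤ h x := (hx.2 : (c : ℝ≥0∞) < h x).le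
              rw [min_eq_right hxc]
              exact tsub_le_tsub_right (min_le_right _ _) _
          _ = d * μ₂ (S ∩ E) := setLIntegral_const _ _
      calc τ S = τ (S ∩ E) + τ (S \ E) := hsplit.symm
        _ = τ (S ∩ E) := by rw [hτdiff, add_zero]
        _ ≤ d * μ₂ (S ∩ E) := hτSE
    constructor
    · have h1 := (hlow (T ⁻¹' A) (hT hA)).trans
        ((le_of_eq hτinv).trans (hupp A hA))
      exact (ENNReal.mul_le_mul_iff_right hd0 hdtop).mp h1
    · have h1 := (hlow A hA).trans ((le_of_eq hτinv.symm).trans (hupp (T ⁻¹' A) (hT hA)))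
      exact (ENNReal.mul_le_mul_iff_right hd0 hdtop).mp h1
  -- union over the sequence c + (k+1)⁻¹
  have hEunion : ∀ S : Set X, S ∩ E =
      ⋃ k : ℕ, S ∩ {x | ((c + ((k : ℝ≥0) + 1)⁻¹ : ℝ≥0) : ℝ≥0∞) ≤ h x} := by
    intro S
    ext x
    simp only [mem_inter_iff, mem_iUnion, mem_setOf_eq]
    constructor
    · rintro ⟨hxS, hxE⟩
      obtain ⟨k, hk⟩ := exists_step hxE
      exact ⟨k, hxS, hk⟩
    · rintro ⟨k, hxS, hk⟩
      refine ⟨hxS, lt_of_lt_of_le ?_ hk⟩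
      rw [ENNReal.coe_lt_coe]
      exact lt_add_of_pos_right _ (by positivity)
  have hmono : ∀ S : Set X, Monotone fun k : ℕ =>
      S ∩ {x | ((c + ((k : ℝ≥0) + 1)⁻¹ : ℝ≥0) : ℝ≥0∞) ≤ h x} := by
    intro S k l hkl
    apply inter_subset_inter_right
    intro x hx
    simp only [mem_setOf_eq] at hx ⊢
    refine le_trans ?_ hx
    rw [ENNReal.coe_le_coe]
    apply add_le_add_right
    apply inv_anti₀
    · positivity
    · exact add_le_add_left (Nat.cast_le.mpr hkl) 1
  have hgtc : ∀ k : ℕ, c < c + ((k : ℝ≥0) + 1)⁻¹ := by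
    intro k
    exact lt_add_of_pos_right _ (by positivity)
  have heq : ∀ A : Set X, MeasurableSet A → μ₂ (T ⁻¹' A ∩ E) = μ₂ (A ∩ E) := by
    intro A hA
    apply le_antisymm
    · rw [hEunion (T ⁻¹' A), Monotone.measure_iUnion (hmono _)]
      exact iSup_le fun k => (key _ (hgtc k) A hA).1
    · rw [hEunion A, Monotone.measure_iUnion (hmono _)]
      exact iSup_le fun k => (key _ (hgtc k) A hA).2
  constructor
  · -- μ₂ (T⁻¹E \ E) = 0, by localization
    have hloc : ∀ k : ℕ, μ₂ (T ⁻¹' (E ∩ spanningSets μ₂ k) \ E) = 0 := by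
      intro k
      have hEk : MeasurableSet (E ∩ spanningSets μ₂ k) := hE.inter (measurableSet_spanningSets μ₂ k)
      have h1 : μ₂ (T ⁻¹' (E ∩ spanningSets μ₂ k) ∩ E) = μ₂ (E ∩ spanningSets μ₂ k) := by
        rw [heq _ hEk, inter_assoc, inter_comm (spanningSets μ₂ k) E, ← inter_assoc,
          inter_self]
      have h2 : μ₂ (T ⁻¹' (E ∩ spanningSets μ₂ k) ∩ E) + μ₂ (T ⁻¹' (E ∩ spanningSets μ₂ k) \ E)
          = μ₂ (T ⁻¹' (E ∩ spanningSets μ₂ k)) := measure_inter_add_diff _ hE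
      rw [hfull _ hEk, h1] at h2
      have hfin : μ₂ (E ∩ spanningSets μ₂ k) ≠ ∞ :=
        ((measure_mono inter_subset_right).trans_lt (measure_spanningSets_lt_top μ₂ k)).ne
      nth_rewrite 2 [← add_zero (μ₂ (E ∩ spanningSets μ₂ k))] at h2
      exact (ENNReal.add_right_inj hfin).mp h2
    have hcover : T ⁻¹' E \ E ⊆ ⋃ k, T ⁻¹' (E ∩ spanningSets μ₂ k) \ E := by
      intro x hx
      have : T x ∈ ⋃ k, E ∩ spanningSets μ₂ k := by
        rw [← inter_iUnion, iUnion_spanningSets, inter_univ]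
        exact hx.1
      obtain ⟨k, hk⟩ := mem_iUnion.mp this
      exact mem_iUnion.mpr ⟨k, hk, hx.2⟩
    exact measure_mono_null hcover (measure_iUnion_null hloc)
  · -- μ₂ (E \ T⁻¹E) = 0
    have h1 := heq Eᶜ (hE.compl)
    rw [compl_inter_self, measure_empty] at h1
    have : E \ T ⁻¹' E ⊆ T ⁻¹' Eᶜ ∩ E := by
      intro x hx
      exact ⟨hx.2, hx.1⟩
    exact measure_mono_null this h1

private lemma E_dichotomy [IsProbabilityMeasure m] (hMM : MarcoMartens m T Xs K)
    (herg : ∀ A : Set X, MeasurableSet A → T ⁻¹' A = A → m A = 0 ∨ m Aᶜ = 0)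
    {μ₁ μ₂ : Measure X} [SigmaFinite μ₁] [SigmaFinite μ₂]
    (hmap₁ : μ₁.map T = μ₁) (hmap₂ : μ₂.map T = μ₂)
    (h12 : μ₁ ≪ μ₂) (h2m : μ₂ ≪ m) (hm2 : m ≪ μ₂) (c : ℝ≥0) :
    m {x | (c : ℝ≥0∞) < μ₁.rnDeriv μ₂ x} = 0 ∨
    m {x | (c : ℝ≥0∞) < μ₁.rnDeriv μ₂ x}ᶜ = 0 := by
  have hT : Measurable T := hMM.measurable_T
  set h : X → ℝ≥0∞ := μ₁.rnDeriv μ₂ with hhdef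
  have hh : Measurable h := Measure.measurable_rnDeriv μ₁ μ₂
  set E := {x | (c : ℝ≥0∞) < h x} with hEdef
  have hE : MeasurableSet E := measurableSet_lt measurable_const hh
  obtain ⟨hd1, hd2⟩ := E_invariant hMM hmap₁ hmap₂ h12 h2m hm2 c
  set N₀ := (T ⁻¹' E \ E) ∪ (E \ T ⁻¹' E) with hN₀def
  have hN₀meas : MeasurableSet N₀ := ((hT hE).diff hE).union (hE.diff (hT hE))
  have hN₀ : m N₀ = 0 := measure_union_null (hm2 hd1) (hm2 hd2)
  have hiter : ∀ n : ℕ, m (T^[n] ⁻¹' N₀) = 0 :=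
    fun n => null_preimage_iter hT hMM.quasi_invariant n hN₀meas hN₀
  have hdiffn : ∀ n : ℕ, m (T^[n] ⁻¹' E \ E) = 0 ∧ m (E \ T^[n] ⁻¹' E) = 0 := by
    intro n
    induction n with
    | zero => simp
    | succ n ih =>
      have hiterate : T^[n + 1] ⁻¹' E = T^[n] ⁻¹' (T ⁻¹' E) := by
        rw [Function.iterate_succ', Set.preimage_comp]
      constructor
      · have hsub : T^[n + 1] ⁻¹' E \ E ⊆
            (T^[n] ⁻¹' N₀) ∪ (T^[n] ⁻¹' E \ E) := by
          intro x hx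
          rw [hiterate] at hx
          by_cases hmem : x ∈ T^[n] ⁻¹' E
          · exact Or.inr ⟨hmem, hx.2⟩
          · exact Or.inl (Or.inl ⟨hx.1, hmem⟩)
        exact measure_mono_null hsub (measure_union_null (hiter n) ih.1)
      · have hsub : E \ T^[n + 1] ⁻¹' E ⊆
            (T^[n] ⁻¹' N₀) ∪ (E \ T^[n] ⁻¹' E) := by
          intro x hx
          rw [hiterate] at hx
          by_cases hmem : x ∈ T^[n] ⁻¹' E
          · exact Or.inl (Or.inr ⟨hmem, hx.2⟩)
          · exact Or.inr ⟨hx.1, hmem⟩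
        exact measure_mono_null hsub (measure_union_null (hiter n) ih.2)
  set Et := ⋂ N : ℕ, ⋃ n : ℕ, ⋃ _ : N ≤ n, T^[n] ⁻¹' E with hEtdef
  have hEtmeas : MeasurableSet Et :=
    MeasurableSet.iInter fun N => MeasurableSet.iUnion fun n =>
      MeasurableSet.iUnion fun _ => (hT.iterate n) hE
  have hEtmem : ∀ x, x ∈ Et ↔ ∀ N : ℕ, ∃ n, N ≤ n ∧ T^[n] x ∈ E := by
    intro x
    simp only [hEtdef, mem_iInter, mem_iUnion, exists_prop, mem_preimage]
  have hfix : T ⁻¹' Et = Et := by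
    ext x
    rw [mem_preimage, hEtmem, hEtmem]
    constructor
    · intro hx N
      obtain ⟨n, hn, hnE⟩ := hx N
      refine ⟨n + 1, hn.trans (Nat.le_succ n), ?_⟩
      rwa [Function.iterate_succ_apply]
    · intro hx N
      obtain ⟨n, hn, hnE⟩ := hx (N + 1)
      obtain ⟨k, rfl⟩ : ∃ k, n = k + 1 := ⟨n - 1, by omega⟩
      exact ⟨k, by omega, by rwa [Function.iterate_succ_apply] at hnE⟩
  have hEt1 : m (Et \ E) = 0 := by
    have hsub : Et \ E ⊆ ⋃ n, (T^[n] ⁻¹' E \ E) := by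
      rintro x ⟨hx1, hx2⟩
      obtain ⟨n, _, hnE⟩ := (hEtmem x).mp hx1 0
      exact mem_iUnion.mpr ⟨n, hnE, hx2⟩
    exact measure_mono_null hsub (measure_iUnion_null fun n => (hdiffn n).1)
  have hEt2 : m (E \ Et) = 0 := by
    have hsub : E \ Et ⊆ ⋃ N, (E \ T^[N] ⁻¹' E) := by
      rintro x ⟨hx1, hx2⟩
      rw [hEtmem x] at hx2
      push_neg at hx2
      obtain ⟨N, hN⟩ := hx2
      exact mem_iUnion.mpr ⟨N, hx1, fun hmem => hN N le_rfl hmem⟩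
    exact measure_mono_null hsub (measure_iUnion_null fun n => (hdiffn n).2)
  rcases herg Et hEtmeas hfix with hc1 | hc1
  · left
    have : E ⊆ (E \ Et) ∪ Et := by
      intro x hx
      by_cases hmem : x ∈ Et
      · exact Or.inr hmem
      · exact Or.inl ⟨hx, hmem⟩
    exact measure_mono_null this (measure_union_null hEt2 hc1)
  · right
    have : Eᶜ ⊆ Etᶜ ∪ (Et \ E) := by
      intro x hx
      by_cases hmem : x ∈ Et
      · exact Or.inr ⟨hmem, hx⟩
      · exact Or.inl hmem
    exact measure_mono_null this (measure_union_null hc1 hEt1)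

end Aux

/-- For a Marco–Martens map `T` which in addition is ergodic with respect to `m`, the σ-finite
`T`-invariant measure equivalent to `m` is unique up to a positive multiplicative constant:
if `μ₁` and `μ₂` are σ-finite `T`-invariant measures each equivalent to `m`, then `μ₁ = c μ₂`
for some constant `c > 0`. -/
theorem stmt15 {X : Type*} [MeasurableSpace X] (m : Measure X) [IsProbabilityMeasure m]
    (T : X → X) (Xs : ℕ → Set X) (K : ℕ → ℝ) (hMM : MarcoMartens m T Xs K)
    (herg : ∀ A : Set X, MeasurableSet A → T ⁻¹' A = A → m A = 0 ∨ m Aᶜ = 0) :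
    ∀ μ₁ μ₂ : Measure X, SigmaFinite μ₁ → SigmaFinite μ₂ →
      (∀ A : Set X, MeasurableSet A → μ₁ (T ⁻¹' A) = μ₁ A) →
      (∀ A : Set X, MeasurableSet A → μ₂ (T ⁻¹' A) = μ₂ A) →
      μ₁ ≪ m → m ≪ μ₁ → μ₂ ≪ m → m ≪ μ₂ →
      ∃ c : NNReal, 0 < c ∧ μ₁ = c • μ₂ := by
  intro μ₁ μ₂ hsf₁ hsf₂ hinv₁ hinv₂ h1m hm1 h2m hm2
  haveI := hsf₁
  haveI := hsf₂
  have hT : Measurable T := hMM.measurable_T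
  have hmap₁ : μ₁.map T = μ₁ := Measure.ext fun A hA => by
    rw [Measure.map_apply hT hA, hinv₁ A hA]
  have hmap₂ : μ₂.map T = μ₂ := Measure.ext fun A hA => by
    rw [Measure.map_apply hT hA, hinv₂ A hA]
  have h12 : μ₁ ≪ μ₂ := h1m.trans hm2
  set h : X → ℝ≥0∞ := μ₁.rnDeriv μ₂ with hhdef
  have hh : Measurable h := Measure.measurable_rnDeriv μ₁ μ₂
  have hwd : μ₂.withDensity h = μ₁ := Measure.withDensity_rnDeriv_eq μ₁ μ₂ h12
  have hdich : ∀ c : ℝ≥0, m {x | (c : ℝ≥0∞) < h x} = 0 ∨ m {x | (c : ℝ≥0∞) < h x}ᶜ = 0 :=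
    fun c => E_dichotomy hMM herg hmap₁ hmap₂ h12 h2m hm2 c
  have hcompl : ∀ c : ℝ≥0, {x | (c : ℝ≥0∞) < h x}ᶜ = {x | h x ≤ (c : ℝ≥0∞)} := by
    intro c
    ext x
    simp [not_lt]
  have hzero : m {x | h x = 0} = 0 := by
    have hmeas0 : MeasurableSet {x | h x = 0} := hh (measurableSet_singleton 0)
    have hmu10 : μ₁ {x | h x = 0} = 0 := by
      rw [← hwd, withDensity_apply _ hmeas0]
      refine le_antisymm ?_ (zero_le)
      calc ∫⁻ x in {x | h x = 0}, h x ∂μ₂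
          ≤ ∫⁻ _ in {x | h x = 0}, 0 ∂μ₂ :=
            setLIntegral_mono' hmeas0 fun x hx => le_of_eq hx
        _ = 0 := by simp
    exact hm1 hmu10
  have hfin : m {x | h x = ∞} = 0 := by
    have hlt := Measure.rnDeriv_lt_top μ₁ μ₂
    rw [ae_iff] at hlt
    apply hm2
    refine measure_mono_null (fun x hx => ?_) hlt
    simp only [mem_setOf_eq, not_lt, top_le_iff]
    exact hx
  set R := {c : ℝ≥0 | 0 < c ∧ m {x | (c : ℝ≥0∞) < h x} = 0} with hRdef
  have hRne : R.Nonempty := by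
    by_contra hno
    rw [Set.not_nonempty_iff_eq_empty] at hno
    have hle : ∀ c : ℝ≥0, 0 < c → m {x | h x ≤ (c : ℝ≥0∞)} = 0 := by
      intro c hc
      rcases hdich c with hd | hd
      · exfalso
        have hmem : c ∈ R := ⟨hc, hd⟩
        rw [hno] at hmem
        exact hmem
      · rwa [hcompl] at hd
    have hcover : {x | h x ≠ ∞} ⊆ ⋃ n : ℕ, {x | h x ≤ (((n : ℝ≥0) + 1 : ℝ≥0) : ℝ≥0∞)} := by
      intro x hx
      obtain ⟨n, hn⟩ := exists_nat_ge (h x).toNNReal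
      refine mem_iUnion.mpr ⟨n, ?_⟩
      have hxne : h x ≠ ∞ := hx
      rw [mem_setOf_eq, ← ENNReal.coe_toNNReal hxne, ENNReal.coe_le_coe]
      exact hn.trans (le_add_of_nonneg_right zero_le_one)
    have hne_null : m {x | h x ≠ ∞} = 0 :=
      measure_mono_null hcover (measure_iUnion_null fun n => hle _ (by positivity))
    have : m univ = 0 := by
      have huniv : (univ : Set X) ⊆ {x | h x ≠ ∞} ∪ {x | h x = ∞} := by
        intro x _
        by_cases hx : h x = ∞
        · exact Or.inr hx
        · exact Or.inl hx
      exact measure_mono_null huniv (measure_union_null hne_null hfin)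
    rw [measure_univ] at this
    exact one_ne_zero this
  set c₀ := sInf R with hc₀def
  have hnull_ge : ∀ c' : ℝ≥0, c₀ < c' → m {x | (c' : ℝ≥0∞) ≤ h x} = 0 := by
    intro c' hc'
    obtain ⟨r, hrR, hrlt⟩ := exists_lt_of_csInf_lt hRne hc'
    refine measure_mono_null (fun x hx => ?_) hrR.2
    exact lt_of_lt_of_le (ENNReal.coe_lt_coe.mpr hrlt) hx
  have hc₀pos : 0 < c₀ := by
    rw [pos_iff_ne_zero]
    intro hc₀0
    have hnull0 : m {x | 0 < h x} = 0 := by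
      have hcov : {x | 0 < h x} ⊆
          ⋃ k : ℕ, {x | ((((0 : ℝ≥0) + ((k : ℝ≥0) + 1)⁻¹ : ℝ≥0)) : ℝ≥0∞) ≤ h x} := by
        intro x hx
        obtain ⟨k, hk⟩ := exists_step (c := 0) (by simpa using hx)
        exact mem_iUnion.mpr ⟨k, hk⟩
      refine measure_mono_null hcov (measure_iUnion_null fun k => hnull_ge _ ?_)
      rw [hc₀0]
      positivity
    have huniv : (univ : Set X) ⊆ {x | h x = 0} ∪ {x | 0 < h x} := by
      intro x _
      rcases eq_or_ne (h x) 0 with hx | hx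
      · exact Or.inl hx
      · exact Or.inr (pos_iff_ne_zero.mpr hx)
    have : m univ = 0 := measure_mono_null huniv (measure_union_null hzero hnull0)
    rw [measure_univ] at this
    exact one_ne_zero this
  have hc₀top : m {x | (c₀ : ℝ≥0∞) < h x} = 0 := by
    have hcov : {x | (c₀ : ℝ≥0∞) < h x} ⊆
        ⋃ k : ℕ, {x | ((c₀ + ((k : ℝ≥0) + 1)⁻¹ : ℝ≥0) : ℝ≥0∞) ≤ h x} := by
      intro x hx
      obtain ⟨k, hk⟩ := exists_step hx
      exact mem_iUnion.mpr ⟨k, hk⟩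
    refine measure_mono_null hcov (measure_iUnion_null fun k => hnull_ge _ ?_)
    exact lt_add_of_pos_right _ (by positivity)
  have hc₀bot : m {x | h x < (c₀ : ℝ≥0∞)} = 0 := by
    have hbelow : ∀ c : ℝ≥0, c < c₀ → m {x | h x ≤ (c : ℝ≥0∞)} = 0 := by
      intro c hc
      rcases eq_or_ne c 0 with hc0 | hc0
      · refine measure_mono_null (fun x hx => ?_) hzero
        rw [hc0] at hx
        simpa using hx
      · have hcpos : 0 < c := pos_iff_ne_zero.mpr hc0
        have hcR : c ∉ R := fun hmem =>
          absurd (csInf_le (OrderBot.bddBelow R) hmem) (not_le.mpr hc)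
        rcases hdich c with hd | hd
        · exact absurd ⟨hcpos, hd⟩ hcR
        · rwa [hcompl] at hd
    have hcov : {x | h x < (c₀ : ℝ≥0∞)} ⊆
        ⋃ k : ℕ, {x | h x ≤ ((c₀ - ((k : ℝ≥0) + 1)⁻¹ : ℝ≥0) : ℝ≥0∞)} := by
      intro x hx
      have hxne : h x ≠ ∞ := (hx.trans ENNReal.coe_lt_top).ne
      have hx' : (((h x).toNNReal : ℝ≥0) : ℝ≥0∞) < (c₀ : ℝ≥0∞) := by
        rwa [ENNReal.coe_toNNReal hxne]
      obtain ⟨k, hk⟩ := exists_step hx'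
      rw [ENNReal.coe_le_coe] at hk
      refine mem_iUnion.mpr ⟨k, ?_⟩
      rw [mem_setOf_eq, ← ENNReal.coe_toNNReal hxne, ENNReal.coe_le_coe]
      exact le_tsub_of_add_le_right hk
    refine measure_mono_null hcov (measure_iUnion_null fun k => hbelow _ ?_)
    exact tsub_lt_self hc₀pos (by positivity)
  have hne : m {x | h x ≠ (c₀ : ℝ≥0∞)} = 0 := by
    have hcov : {x | h x ≠ (c₀ : ℝ≥0∞)} ⊆
        {x | h x < (c₀ : ℝ≥0∞)} ∪ {x | (c₀ : ℝ≥0∞) < h x} :=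
      fun x hx => lt_or_gt_of_ne hx
    exact measure_mono_null hcov (measure_union_null hc₀bot hc₀top)
  have haeμ₂ : h =ᵐ[μ₂] fun _ => (c₀ : ℝ≥0∞) := by
    rw [Filter.EventuallyEq, ae_iff]
    exact h2m hne
  refine ⟨c₀, hc₀pos, ?_⟩
  calc μ₁ = μ₂.withDensity h := hwd.symm
    _ = μ₂.withDensity (fun _ => (c₀ : ℝ≥0∞)) := withDensity_congr_ae haeμ₂
    _ = (c₀ : ℝ≥0∞) • μ₂ := withDensity_const _
    _ = c₀ • μ₂ := (ENNReal.smul_def c₀ μ₂).symm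
end
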